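/- arXiv:1608.00904 — 2 statements merged into one kernel-verified Lean document; each statement's English description precedes it below -/
import Mathlib

section
/- For all n ≥ 1 and 1 ≤ m ≤ n, the graph K_{2n+1} − mK_2 obtained by deleting m pairwise non-adjacent edges from the complete graph on 2n+1 vertices satisfies def(K_{2n+1} − mK_2) ≥ n − m. -/
open scoped Classical

/-- A proper edge-coloring: distinct edges sharing a vertex receive distinct colors. -/
def IsProperEdgeColoring {V : Type*} (G : SimpleGraph V) (c : Sym2 V → ℕ) : Prop :=
  ∀ e ∈ G.edgeSet, ∀ e' ∈ G.edgeSet, e ≠ e' → (∃ v, v ∈ e ∧ v ∈ e') → c e ≠ c e'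

/-- A proper `t`-edge-coloring: proper, colors lie in `{1,…,t}`, and all colors are used. -/
def IsProperTEdgeColoring {V : Type*} (G : SimpleGraph V) (t : ℕ) (c : Sym2 V → ℕ) : Prop :=
  IsProperEdgeColoring G c ∧ (∀ e ∈ G.edgeSet, c e ∈ Finset.Icc 1 t) ∧
    ∀ k ∈ Finset.Icc 1 t, ∃ e ∈ G.edgeSet, c e = k

/-- The vSpectrum of a vertex: the set of colors appearing on edges incident to `v`. -/
noncomputable def vSpectrum {V : Type*} [Fintype V] (G : SimpleGraph V) (c : Sym2 V → ℕ)
    (v : V) : Finset ℕ :=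
  (Finset.univ.filter (fun u => G.Adj v u)).image (fun u => c s(v, u))

/-- The deficiency of a finite set of naturals: `max S − min S − |S| + 1`. -/
def setDef (S : Finset ℕ) : ℕ := (S.max.getD 0 - S.min.getD 0) - (S.card - 1)

/-- The deficiency of a proper edge-coloring: the sum of vertex deficiencies. -/
noncomputable def colDef {V : Type*} [Fintype V] (G : SimpleGraph V) (c : Sym2 V → ℕ) : ℕ :=
  ∑ v, setDef (vSpectrum G c v)

/-- The deficiency of a graph: the minimum deficiency over all proper edge-colorings. -/
noncomputable def graphDef {V : Type*} [Fintype V] (G : SimpleGraph V) : ℕ :=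
  sInf {d | ∃ c, IsProperEdgeColoring G c ∧ colDef G c = d}

/-- `w_def G`: the least `t` such that some proper `t`-edge-coloring attains `def(G)`. -/
noncomputable def wdef {V : Type*} [Fintype V] (G : SimpleGraph V) : ℕ :=
  sInf {t | ∃ c, IsProperTEdgeColoring G t c ∧ colDef G c = graphDef G}

/-- `W_def G`: the greatest `t` such that some proper `t`-edge-coloring attains `def(G)`. -/
noncomputable def Wdef {V : Type*} [Fintype V] (G : SimpleGraph V) : ℕ :=
  sSup {t | ∃ c, IsProperTEdgeColoring G t c ∧ colDef G c = graphDef G}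

/-- A graph is interval colorable if some proper edge-coloring has deficiency `0`. -/
def IntervalColorable {V : Type*} [Fintype V] (G : SimpleGraph V) : Prop :=
  ∃ c, IsProperEdgeColoring G c ∧ colDef G c = 0

/-- `w G`: the least `t` such that `G` has an interval `t`-coloring. -/
noncomputable def wint {V : Type*} [Fintype V] (G : SimpleGraph V) : ℕ :=
  sInf {t | ∃ c, IsProperTEdgeColoring G t c ∧ colDef G c = 0}

/-- `W G`: the greatest `t` such that `G` has an interval `t`-coloring. -/
noncomputable def Wint {V : Type*} [Fintype V] (G : SimpleGraph V) : ℕ :=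
  sSup {t | ∃ c, IsProperTEdgeColoring G t c ∧ colDef G c = 0}

namespace S16



variable (n : ℕ) (M : Finset (Sym2 (Fin (2 * n + 1))))

def Gg : SimpleGraph (Fin (2 * n + 1)) := (SimpleGraph.completeGraph (Fin (2 * n + 1))).deleteEdges ↑M

lemma gg_adj (u v : Fin (2 * n + 1)) : (Gg n M).Adj u v ↔ u ≠ v ∧ s(u, v) ∉ M := by
  simp [Gg, SimpleGraph.deleteEdges_adj, SimpleGraph.completeGraph]

/-- v is covered by the matching -/
def mtch (v : Fin (2 * n + 1)) : Prop := ∃ e ∈ M, v ∈ e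

noncomputable def degv (v : Fin (2 * n + 1)) : ℕ :=
  (Finset.univ.filter (fun u => (Gg n M).Adj v u)).card

variable {n M}

lemma partner_eq (hdisj : ∀ e ∈ M, ∀ f ∈ M, e ≠ f → ∀ v, v ∈ e → v ∉ f)
    {u w v : Fin (2 * n + 1)} (h1 : s(u, v) ∈ M) (h2 : s(w, v) ∈ M) : u = w := by
  by_cases h : s(u, v) = s(w, v)
  · rwa [Sym2.congr_left] at h
  · exact absurd (Sym2.mem_mk_right w v) (hdisj _ h1 _ h2 h v (Sym2.mem_mk_right u v))

lemma nonadj_mem (hvu : ¬ (Gg n M).Adj v u) (hne : v ≠ u) : s(v, u) ∈ M := by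
  rw [gg_adj] at hvu
  push_neg at hvu
  exact hvu hne

lemma mem_mtch_left (h : s(v, u) ∈ M) : mtch n M v := ⟨_, h, Sym2.mem_mk_left v u⟩
lemma mem_mtch_right (h : s(v, u) ∈ M) : mtch n M u := ⟨_, h, Sym2.mem_mk_right v u⟩

lemma degv_le (v : Fin (2 * n + 1)) : degv n M v ≤ 2 * n := by
  have hsub : (Finset.univ.filter (fun u => (Gg n M).Adj v u)) ⊆ Finset.univ.erase v := by
    intro u hu
    simp only [Finset.mem_filter] at hu
    exact Finset.mem_erase.2 ⟨(((gg_adj n M v u).1 hu.2).1).symm, Finset.mem_univ u⟩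
  calc degv n M v ≤ (Finset.univ.erase v).card := Finset.card_le_card hsub
    _ = 2 * n := by rw [Finset.card_erase_of_mem (Finset.mem_univ v)]; simp

lemma degv_ge (hdisj : ∀ e ∈ M, ∀ f ∈ M, e ≠ f → ∀ v, v ∈ e → v ∉ f)
    (v : Fin (2 * n + 1)) :
    2 * n - (if mtch n M v then 1 else 0) ≤ degv n M v := by
  classical
  set nbrs := (Finset.univ.filter (fun u => (Gg n M).Adj v u)) with hnbrs
  have hsub : nbrs ⊆ Finset.univ.erase v := by
    intro u hu
    simp only [hnbrs, Finset.mem_filter] at hu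
    exact Finset.mem_erase.2 ⟨(((gg_adj n M v u).1 hu.2).1).symm, Finset.mem_univ u⟩
  have hmem : ∀ a ∈ Finset.univ.erase v \ nbrs, s(a, v) ∈ M := by
    intro a ha
    rw [Finset.mem_sdiff, Finset.mem_erase] at ha
    have : s(v, a) ∈ M := by
      apply nonadj_mem (u := a) (v := v) _ (Ne.symm ha.1.1)
      intro hadj
      exact ha.2 (Finset.mem_filter.2 ⟨Finset.mem_univ a, hadj⟩)
    rwa [Sym2.eq_swap] at this
  have hcard : (Finset.univ.erase v \ nbrs).card ≤ (if mtch n M v then 1 else 0) := by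
    by_cases hm : mtch n M v
    · simp only [hm, if_true]
      rw [Finset.card_le_one]
      intro a ha b hb
      exact partner_eq hdisj (hmem a ha) (hmem b hb)
    · simp only [hm, if_false]
      rw [Nat.le_zero, Finset.card_eq_zero, Finset.eq_empty_iff_forall_notMem]
      intro a ha
      exact hm (mem_mtch_right (hmem a ha))
  have h1 : (Finset.univ.erase v \ nbrs).card = 2 * n - nbrs.card := by
    rw [Finset.card_sdiff_of_subset hsub, Finset.card_erase_of_mem (Finset.mem_univ v)]
    simp
  have h2 : nbrs.card ≤ 2 * n := degv_le v
  unfold degv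
  rw [← hnbrs]
  omega

lemma mtch_card (hcard : M.card = m)
    (hM : ∀ e ∈ M, ¬e.IsDiag)
    (hdisj : ∀ e ∈ M, ∀ f ∈ M, e ≠ f → ∀ v, v ∈ e → v ∉ f) :
    (Finset.univ.filter (fun v => mtch n M v)).card = 2 * m := by
  classical
  have : Finset.univ.filter (fun v => mtch n M v)
      = M.biUnion (fun e => Finset.univ.filter (fun v => v ∈ e)) := by
    ext v
    rw [Finset.mem_filter, Finset.mem_biUnion]
    simp [mtch]
  rw [this, Finset.card_biUnion]
  · have h2 : ∀ e ∈ M, (Finset.univ.filter (fun v => v ∈ e)).card = 2 := by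
      intro e he
      obtain ⟨a, b⟩ := e
      have hab : a ≠ b := by
        intro h; exact hM _ he (by simp [Sym2.isDiag_iff_proj_eq, h])
      have hset : Finset.univ.filter (fun v => v ∈ s(a, b)) = {a, b} := by
        ext v; simp [Sym2.mem_iff]
      rw [hset, Finset.card_insert_of_notMem (by simp [hab]), Finset.card_singleton]
    rw [Finset.sum_congr rfl h2, Finset.sum_const, hcard]; ring
  · intro e he f hf hef
    simp only [Function.onFun]
    rw [Finset.disjoint_left]
    intro v hv hvf
    simp only [Finset.mem_filter] at hv hvf
    exact hdisj e he f hf hef v hv.2 hvf.2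


variable {Vt : Type*} [Fintype Vt] {G : SimpleGraph Vt} {c : Sym2 Vt → ℕ}

lemma mem_spec {v u : Vt} (h : G.Adj v u) : c s(v, u) ∈ vSpectrum G c v :=
  Finset.mem_image_of_mem _ (Finset.mem_filter.2 ⟨Finset.mem_univ u, h⟩)

lemma spec_card (hc : IsProperEdgeColoring G c) (v : Vt) :
    (vSpectrum G c v).card = (Finset.univ.filter (fun u => G.Adj v u)).card := by
  unfold vSpectrum
  apply Finset.card_image_of_injOn
  intro u1 h1 u2 h2 heq
  simp only [Finset.coe_filter, Set.mem_setOf_eq] at h1 h2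
  by_contra hne
  have hedne : s(v, u1) ≠ s(v, u2) := fun h => hne (Sym2.congr_right.1 h)
  exact hc _ ((G.mem_edgeSet).2 h1.2) _ ((G.mem_edgeSet).2 h2.2) hedne
    ⟨v, Sym2.mem_mk_left _ _, Sym2.mem_mk_left _ _⟩ heq

-- interval endpoints as integers
noncomputable def Av (G : SimpleGraph Vt) (c : Sym2 Vt → ℕ) (v : Vt) : ℤ :=
  ((vSpectrum G c v).min.getD 0 : ℕ)
noncomputable def Bv (G : SimpleGraph Vt) (c : Sym2 Vt → ℕ) (v : Vt) : ℤ :=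
  ((vSpectrum G c v).max.getD 0 : ℕ)

lemma Av_eq (h : (vSpectrum G c v).Nonempty) : Av G c v = ((vSpectrum G c v).min' h : ℤ) := by
  unfold Av; rw [← Finset.coe_min' h]; rfl

lemma Bv_eq (h : (vSpectrum G c v).Nonempty) : Bv G c v = ((vSpectrum G c v).max' h : ℤ) := by
  unfold Bv; rw [← Finset.coe_max' h]; rfl

lemma Av_le {s : ℕ} (hs : s ∈ vSpectrum G c v) : Av G c v ≤ (s : ℤ) := by
  rw [Av_eq ⟨s, hs⟩]; exact_mod_cast Finset.min'_le _ _ hs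

lemma le_Bv {s : ℕ} (hs : s ∈ vSpectrum G c v) : (s : ℤ) ≤ Bv G c v := by
  rw [Bv_eq ⟨s, hs⟩]; exact_mod_cast Finset.le_max' _ _ hs

lemma Av_mem (h : (vSpectrum G c v).Nonempty) : ∃ s ∈ vSpectrum G c v, (s : ℤ) = Av G c v := by
  exact ⟨_, Finset.min'_mem _ h, (Av_eq h).symm⟩

lemma Bv_mem (h : (vSpectrum G c v).Nonempty) : ∃ s ∈ vSpectrum G c v, (s : ℤ) = Bv G c v := by
  exact ⟨_, Finset.max'_mem _ h, (Bv_eq h).symm⟩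

lemma Av_nonneg : 0 ≤ Av G c v := by unfold Av; positivity

lemma span_ge (h : (vSpectrum G c v).Nonempty) :
    ((vSpectrum G c v).card : ℤ) ≤ Bv G c v - Av G c v + 1 := by
  have hsub : vSpectrum G c v ⊆ Finset.Icc ((vSpectrum G c v).min' h) ((vSpectrum G c v).max' h) := by
    intro s hs
    exact Finset.mem_Icc.2 ⟨Finset.min'_le _ _ hs, Finset.le_max' _ _ hs⟩
  have := Finset.card_le_card hsub
  rw [Nat.card_Icc] at this
  rw [Av_eq h, Bv_eq h]
  have hle : (vSpectrum G c v).min' h ≤ (vSpectrum G c v).max' h :=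
    Finset.min'_le _ _ (Finset.max'_mem _ h)
  omega

lemma setDef_eq (h : (vSpectrum G c v).Nonempty) :
    (setDef (vSpectrum G c v) : ℤ) = Bv G c v - Av G c v + 1 - (vSpectrum G c v).card := by
  unfold setDef
  have e1 : (vSpectrum G c v).min.getD 0 = (vSpectrum G c v).min' h := by
    rw [← Finset.coe_min' h]; rfl
  have e2 : (vSpectrum G c v).max.getD 0 = (vSpectrum G c v).max' h := by
    rw [← Finset.coe_max' h]; rfl
  rw [e1, e2]
  have hle : (vSpectrum G c v).min' h ≤ (vSpectrum G c v).max' h :=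
    Finset.min'_le _ _ (Finset.max'_mem _ h)
  have hcard1 : 1 ≤ (vSpectrum G c v).card := Finset.card_pos.2 h
  have hspan := span_ge h
  rw [Av_eq h, Bv_eq h] at *
  omega


lemma even_used (hc : IsProperEdgeColoring G c) (k : ℤ) :
    Even ((Finset.univ.filter (fun v => ∃ s ∈ vSpectrum G c v, (s : ℤ) = k)).card) := by
  classical
  rcases lt_or_ge k 0 with hk | hk
  · have : (Finset.univ.filter (fun v => ∃ s ∈ vSpectrum G c v, (s : ℤ) = k)) = ∅ := by
      rw [Finset.eq_empty_iff_forall_notMem]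
      rintro v hv
      obtain ⟨s, -, hs⟩ := (Finset.mem_filter.1 hv).2
      omega
    rw [this, Finset.card_empty]
    exact Even.zero
  · obtain ⟨κ, rfl⟩ := Int.eq_ofNat_of_zero_le hk
    set P := Finset.univ.filter (fun v => ∃ s ∈ vSpectrum G c v, (s : ℤ) = (κ : ℤ)) with hP
    have hPmem : ∀ v, v ∈ P ↔ κ ∈ vSpectrum G c v := by
      intro v
      rw [hP, Finset.mem_filter]
      constructor
      · rintro ⟨-, s, hs, heq⟩
        rwa [(by exact_mod_cast heq : s = κ)] at hs
      · intro h; exact ⟨Finset.mem_univ v, κ, h, rfl⟩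
    have hchoice : ∀ v ∈ P, ∃ u, G.Adj v u ∧ c s(v, u) = κ := by
      intro v hv
      obtain ⟨u, hu, hcu⟩ := Finset.mem_image.1 ((hPmem v).1 hv)
      exact ⟨u, (Finset.mem_filter.1 hu).2, hcu⟩
    set F : Vt → Sym2 Vt := fun v =>
      if h : ∃ u, G.Adj v u ∧ c s(v, u) = κ then s(v, h.choose) else s(v, v) with hF
    have hFv : ∀ v (h : ∃ u, G.Adj v u ∧ c s(v, u) = κ), F v = s(v, h.choose) := by
      intro v h; rw [hF]; exact dif_pos h
    have huniq : ∀ v ∈ P, ∀ e ∈ G.edgeSet, v ∈ e → c e = κ → F v = e := by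
      intro v hv e he hve hce
      have h : ∃ u, G.Adj v u ∧ c s(v, u) = κ := hchoice v hv
      rw [hFv v h]
      by_contra hne
      exact hc _ ((G.mem_edgeSet).2 h.choose_spec.1) _ he hne
        ⟨v, Sym2.mem_mk_left _ _, hve⟩ (by rw [h.choose_spec.2, hce])
    rw [Finset.card_eq_sum_card_image F P]
    have hall : ∀ e ∈ P.image F, (P.filter (fun v => F v = e)).card = 2 := by
      intro e he
      obtain ⟨v₀, hv₀, rfl⟩ := Finset.mem_image.1 he
      have h₀ : ∃ u, G.Adj v₀ u ∧ c s(v₀, u) = κ := hchoice v₀ hv₀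
      have hadj₀ : G.Adj v₀ h₀.choose := h₀.choose_spec.1
      have hcol₀ : c s(v₀, h₀.choose) = κ := h₀.choose_spec.2
      have hu₀P : h₀.choose ∈ P := by
        rw [hPmem]
        have h2 := mem_spec (c := c) hadj₀.symm
        rwa [Sym2.eq_swap, hcol₀] at h2
      have hset : P.filter (fun v => F v = F v₀) = {v₀, h₀.choose} := by
        ext v
        rw [Finset.mem_filter, Finset.mem_insert, Finset.mem_singleton]
        constructor
        · rintro ⟨hvP, hFveq⟩
          have hvF : v ∈ F v := by
            rw [hF]; dsimp only; split
            · exact Sym2.mem_mk_left _ _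
            · exact Sym2.mem_mk_left _ _
          rw [hFveq, hFv v₀ h₀] at hvF
          exact Sym2.mem_iff.1 hvF
        · rintro (rfl | rfl)
          · exact ⟨hv₀, rfl⟩
          · refine ⟨hu₀P, ?_⟩
            rw [hFv v₀ h₀]
            apply huniq _ hu₀P _ ((G.mem_edgeSet).2 hadj₀) (Sym2.mem_mk_right _ _) hcol₀
      rw [hset, Finset.card_insert_of_notMem (by simp [hadj₀.ne]), Finset.card_singleton]
    rw [Finset.sum_congr rfl hall, Finset.sum_const]
    exact ⟨(P.image F).card, by ring⟩


lemma AB_le (h : (vSpectrum G c v).Nonempty) : Av G c v ≤ Bv G c v := by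
  obtain ⟨s, hs⟩ := h; exact le_trans (Av_le hs) (le_Bv hs)

noncomputable def usesF (G : SimpleGraph Vt) (c : Sym2 Vt → ℕ) (k : ℤ) : Finset Vt :=
  Finset.univ.filter (fun v => ∃ s ∈ vSpectrum G c v, (s : ℤ) = k)
noncomputable def containsF (G : SimpleGraph Vt) (c : Sym2 Vt → ℕ) (k : ℤ) : Finset Vt :=
  Finset.univ.filter (fun v => Av G c v ≤ k ∧ k ≤ Bv G c v)
noncomputable def missSet (G : SimpleGraph Vt) (c : Sym2 Vt → ℕ) (v : Vt) : Finset ℤ :=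
  (Finset.Icc (Av G c v) (Bv G c v)).filter (fun k => ¬ ∃ s ∈ vSpectrum G c v, (s : ℤ) = k)

lemma fc_split (G : SimpleGraph Vt) (c : Sym2 Vt → ℕ) (k : ℤ) :
    (containsF G c k).card
      = (usesF G c k).card + (Finset.univ.filter (fun v => k ∈ missSet G c v)).card := by
  classical
  have h := Finset.card_filter_add_card_filter_not
    (s := containsF G c k) (p := fun v => ∃ s ∈ vSpectrum G c v, (s : ℤ) = k)
  have e1 : (containsF G c k).filter (fun v => ∃ s ∈ vSpectrum G c v, (s : ℤ) = k)
      = usesF G c k := by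
    ext v
    simp only [containsF, usesF, Finset.mem_filter, Finset.mem_univ, true_and]
    constructor
    · rintro ⟨-, h2⟩; exact h2
    · rintro ⟨s, hs, heq⟩
      refine ⟨⟨?_, ?_⟩, ⟨s, hs, heq⟩⟩
      · rw [← heq]; exact Av_le hs
      · rw [← heq]; exact le_Bv hs
  have e2 : (containsF G c k).filter (fun v => ¬ ∃ s ∈ vSpectrum G c v, (s : ℤ) = k)
      = Finset.univ.filter (fun v => k ∈ missSet G c v) := by
    ext v
    simp only [containsF, missSet, Finset.mem_filter, Finset.mem_univ, true_and,
      Finset.mem_Icc]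
    try tauto
  rw [e1, e2] at h
  exact h.symm

lemma odd_witness (hc : IsProperEdgeColoring G c) (k : ℤ)
    (h : Odd ((containsF G c k).card)) : ∃ v, k ∈ missSet G c v := by
  classical
  have h2 := fc_split G c k
  have h3 := even_used (G := G) (c := c) hc k
  rw [show Finset.univ.filter (fun v => ∃ s ∈ vSpectrum G c v, (s : ℤ) = k) = usesF G c k from rfl] at h3
  have h4 : Odd ((Finset.univ.filter (fun v => k ∈ missSet G c v)).card) := by
    rw [h2] at h
    rw [Nat.odd_iff] at h ⊢
    rw [Nat.even_iff] at h3
    omega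
  obtain ⟨v, hv⟩ := Finset.card_pos.1 (Nat.pos_of_ne_zero (by
    intro h0
    rw [Nat.odd_iff, h0] at h4
    simp at h4))
  exact ⟨v, (Finset.mem_filter.1 hv).2⟩

lemma missSet_card (h : (vSpectrum G c v).Nonempty) :
    ((missSet G c v).card : ℤ)
      = Bv G c v - Av G c v + 1 - (vSpectrum G c v).card := by
  classical
  have heq : missSet G c v
      = Finset.Icc (Av G c v) (Bv G c v) \ ((vSpectrum G c v).image (fun s : ℕ => (s : ℤ))) := by
    ext k
    simp only [missSet, Finset.mem_filter, Finset.mem_sdiff, Finset.mem_image]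
    try tauto
  have hsub : (vSpectrum G c v).image (fun s : ℕ => (s : ℤ)) ⊆ Finset.Icc (Av G c v) (Bv G c v) := by
    intro k hk
    obtain ⟨s, hs, heq⟩ := Finset.mem_image.1 hk
    refine Finset.mem_Icc.2 ⟨?_, ?_⟩
    · rw [← heq]; exact Av_le hs
    · rw [← heq]; exact le_Bv hs
  have hci : ((vSpectrum G c v).image (fun s : ℕ => (s : ℤ))).card = (vSpectrum G c v).card :=
    Finset.card_image_of_injective _ Nat.cast_injective
  have hIcc : ((Finset.Icc (Av G c v) (Bv G c v)).card : ℤ)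
      = Bv G c v - Av G c v + 1 := by
    rw [Int.card_Icc]
    have := AB_le h
    omega
  rw [heq, Finset.card_sdiff_of_subset hsub, hci]
  have hle : (vSpectrum G c v).card ≤ (Finset.Icc (Av G c v) (Bv G c v)).card := by
    rw [← hci]; exact Finset.card_le_card hsub
  push_cast [Nat.cast_sub hle]
  omega


variable {n : ℕ} {M : Finset (Sym2 (Fin (2 * n + 1)))}

lemma spec_card' {c : Sym2 (Fin (2*n+1)) → ℕ}
    (hc : IsProperEdgeColoring (Gg n M) c) (v : Fin (2*n+1)) :
    (vSpectrum (Gg n M) c v).card = degv n M v := spec_card hc v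

lemma degv_le' (v : Fin (2*n+1)) : degv n M v ≤ 2 * n := degv_le v

lemma degv_ge' (hdisj : ∀ e ∈ M, ∀ f ∈ M, e ≠ f → ∀ v, v ∈ e → v ∉ f) (v : Fin (2*n+1)) :
    2 * n - (if mtch n M v then 1 else 0) ≤ degv n M v := degv_ge hdisj v

lemma mtch_card' {m : ℕ} (hcard : M.card = m)
    (hM : ∀ e ∈ M, ¬e.IsDiag)
    (hdisj : ∀ e ∈ M, ∀ f ∈ M, e ≠ f → ∀ v, v ∈ e → v ∉ f) :
    (Finset.univ.filter (fun v => mtch n M v)).card = 2 * m := mtch_card hcard hM hdisj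

lemma partner_eq' (hdisj : ∀ e ∈ M, ∀ f ∈ M, e ≠ f → ∀ v, v ∈ e → v ∉ f)
    {u w v : Fin (2 * n + 1)} (h1 : s(u, v) ∈ M) (h2 : s(w, v) ∈ M) : u = w :=
  partner_eq hdisj h1 h2

lemma nonadj_mem' {v u : Fin (2*n+1)}
    (hvu : ¬ (Gg n M).Adj v u) (hne : v ≠ u) : s(v, u) ∈ M := nonadj_mem hvu hne

-- separation implies non-adjacency
lemma sep_nonadj (hc : IsProperEdgeColoring G c) {u v : Vt}
    (h : Bv G c u < Av G c v) : ¬ G.Adj u v := by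
  intro hadj
  have h1 : c s(u, v) ∈ vSpectrum G c u := mem_spec hadj
  have h2 : c s(v, u) ∈ vSpectrum G c v := mem_spec hadj.symm
  rw [Sym2.eq_swap] at h2
  have := le_Bv h1
  have := Av_le h2
  omega
-- ===================== MAIN LEMMA =====================
lemma key {n m : ℕ} (hm1 : 1 ≤ m) (hmn : m ≤ n)
    {M : Finset (Sym2 (Fin (2 * n + 1)))} (hcard : M.card = m)
    (hM : ∀ e ∈ M, ¬e.IsDiag)
    (hdisj : ∀ e ∈ M, ∀ f ∈ M, e ≠ f → ∀ v, v ∈ e → v ∉ f)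
    (c : Sym2 (Fin (2 * n + 1)) → ℕ)
    (hc : IsProperEdgeColoring (Gg n M) c) :
    (n : ℤ) - m ≤ (colDef (Gg n M) c : ℤ) := by
  classical
  have hn : 1 ≤ n := le_trans hm1 hmn
  set G := Gg n M with hGdef
  -- spectra are nonempty
  have hne : ∀ v, (vSpectrum G c v).Nonempty := by
    intro v
    apply Finset.card_pos.1
    rw [spec_card' hc v]
    have h1 := degv_ge' hdisj v
    have h2 : (if mtch n M v then 1 else 0) ≤ 1 := by split <;> omega
    omega
  -- degree bounds in ℤ
  have hdub : ∀ v, ((vSpectrum G c v).card : ℤ) ≤ 2 * n := by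
    intro v; rw [spec_card' hc v]; exact_mod_cast degv_le' v
  have hdlb : ∀ v, 2 * (n : ℤ) - (if mtch n M v then 1 else 0) ≤ ((vSpectrum G c v).card : ℤ) := by
    intro v
    rw [spec_card' hc v]
    have h1 := degv_ge' hdisj v
    by_cases hm : mtch n M v
    · simp only [hm, if_true] at h1 ⊢; omega
    · simp only [hm, if_false] at h1 ⊢; omega
  -- total deficiency
  have hColDef : (colDef G c : ℤ)
      = ∑ v, (Bv G c v - Av G c v + 1 - (vSpectrum G c v).card) := by
    unfold colDef
    push_cast
    exact Finset.sum_congr rfl (fun v _ => setDef_eq (hne v))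
  set DD : ℤ := ∑ v, (Bv G c v - Av G c v + 1 - (vSpectrum G c v).card) with hDD
  have hDD0 : ∀ v, 0 ≤ Bv G c v - Av G c v + 1 - (vSpectrum G c v).card := by
    intro v; have := span_ge (hne v); omega
  -- pick y with minimal Bv
  obtain ⟨y, -, hy⟩ := Finset.exists_min_image Finset.univ (fun v => Bv G c v)
    ⟨0, Finset.mem_univ 0⟩
  set b1 : ℤ := Bv G c y with hb1
  have hyB : ∀ v, b1 ≤ Bv G c v := fun v => hy v (Finset.mem_univ v)
  set W : Finset ℤ := Finset.Icc (b1 - 2 * n + 1) b1 with hW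
  have hWcard : (W.card : ℤ) = 2 * n := by
    rw [hW, Int.card_Icc]
    have h1 : b1 + 1 - (b1 - 2 * n + 1) = ((2 * n : ℕ) : ℤ) := by push_cast; ring
    rw [h1, Int.toNat_natCast]
    push_cast; ring
  -- the alive predicate
  set alv : ℤ → Prop := fun k =>
    Odd ((containsF G c k).card) ∨ Odd ((containsF G c (k + 2 * n)).card) with halv
  set aliveF := W.filter alv with haliveF
  set deadF := W.filter (fun k => ¬ alv k) with hdeadF
  have hsplitW : aliveF.card + deadF.card = W.card :=
    Finset.card_filter_add_card_filter_not (p := alv)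
  -- STEP A : aliveF.card ≤ DD
  have hstepA : (aliveF.card : ℤ) ≤ DD := by
    have hSig : ((Finset.univ.sigma (fun v => missSet G c v)).card : ℤ) = DD := by
      rw [Finset.card_sigma]
      push_cast
      exact Finset.sum_congr rfl (fun v _ => missSet_card (hne v))
    rw [← hSig]
    have hcast : ∀ k : ℤ, Odd ((containsF G c k).card) ∨ Odd ((containsF G c (k + 2*n)).card) →
        ∃ p : (_ : Fin (2*n+1)) × ℤ, p ∈ Finset.univ.sigma (fun v => missSet G c v) ∧
          (p.2 = k ∨ p.2 = k + 2*n) := by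
      intro k hk
      by_cases h1 : Odd ((containsF G c k).card)
      · obtain ⟨v, hv⟩ := odd_witness hc k h1
        exact ⟨⟨v, k⟩, Finset.mem_sigma.2 ⟨Finset.mem_univ v, hv⟩, Or.inl rfl⟩
      · obtain ⟨v, hv⟩ := odd_witness hc (k + 2*n) (hk.resolve_left h1)
        exact ⟨⟨v, k + 2*n⟩, Finset.mem_sigma.2 ⟨Finset.mem_univ v, hv⟩, Or.inr rfl⟩
    -- choice function
    set FF : ℤ → ((_ : Fin (2*n+1)) × ℤ) := fun k =>
      if h : ∃ p : (_ : Fin (2*n+1)) × ℤ, p ∈ Finset.univ.sigma (fun v => missSet G c v) ∧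
          (p.2 = k ∨ p.2 = k + 2*n) then h.choose else ⟨y, k⟩ with hFF
    exact_mod_cast Finset.card_le_card_of_injOn FF
      (by
        intro k hk
        rw [haliveF, Finset.mem_coe, Finset.mem_filter] at hk
        have h := hcast k hk.2
        rw [hFF]; simp only [dif_pos h]
        exact h.choose_spec.1)
      (by
        intro k1 hk1 k2 hk2 heq
        simp only [Finset.coe_filter, Set.mem_setOf_eq, haliveF] at hk1 hk2
        have h1 := hcast k1 hk1.2
        have h2 := hcast k2 hk2.2
        rw [hFF] at heq
        simp only [dif_pos h1, dif_pos h2] at heq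
        have e2 : (h1.choose).2 = (h2.choose).2 := by rw [heq]
        have m1 := h1.choose_spec.2
        have m2 := h2.choose_spec.2
        have hw1 : k1 ∈ W := by
          have := hk1.1; rwa [hW] at this ⊢
        have hw2 : k2 ∈ W := hk2.1
        rw [hW, Finset.mem_Icc] at hw1 hw2
        rcases m1 with m1 | m1 <;> rcases m2 with m2 | m2 <;> omega)
  -- STEP B groundwork : dead pairs have a charge vertex
  have main3 : ∀ k ∈ W, ¬ alv k →
      ∃ v, (k < Av G c v ∧ Bv G c v < k + 2*n) ∨ (Av G c v ≤ k ∧ k + 2*n ≤ Bv G c v) := by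
    intro k hkW hdead
    rw [hW, Finset.mem_Icc] at hkW
    rw [halv, not_or, Nat.not_odd_iff_even, Nat.not_odd_iff_even] at hdead
    obtain ⟨hd1, hd2⟩ := hdead
    by_contra hno
    push_neg at hno
    by_cases habove : ∃ w, k + 2*n < Av G c w
    · -- Case B : a vertex starting above the window pair
      obtain ⟨w, hw⟩ := habove
      have hkb : b1 + 1 ≤ k + 2*n := by omega
      have hABy : Av G c y ≤ b1 := by rw [hb1]; exact AB_le (hne y)
      have hwy : y ≠ w := by
        intro h; rw [← h] at hw; omega
      have hnadj : ¬ G.Adj y w := sep_nonadj hc (by omega)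
      have hMyw : s(y, w) ∈ M := nonadj_mem' (by rwa [hGdef] at hnadj) hwy
      have hseteq : containsF G c (k + 2*n) = (Finset.univ.erase w).erase y := by
        ext v
        rw [containsF, Finset.mem_filter, Finset.mem_erase, Finset.mem_erase]
        constructor
        · rintro ⟨-, h1, h2⟩
          refine ⟨?_, ?_, Finset.mem_univ v⟩
          · intro h; rw [h] at h2; omega
          · intro h; rw [h] at h1; omega
        · rintro ⟨hvy, hvw, -⟩
          refine ⟨Finset.mem_univ v, ?_, ?_⟩
          · -- Av v ≤ k + 2n
            by_contra hgt
            push_neg at hgt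
            have hnadj2 : ¬ G.Adj y v := sep_nonadj hc (by omega)
            have h1 : s(y, v) ∈ M := nonadj_mem' (by rwa [hGdef] at hnadj2)
              (by intro h; rw [← h] at hgt; omega)
            have h2 : s(v, y) ∈ M := by rwa [Sym2.eq_swap] at h1
            have h3 : s(w, y) ∈ M := by rwa [Sym2.eq_swap] at hMyw
            exact hvw (partner_eq' hdisj h2 h3)
          · -- k + 2n ≤ Bv v
            by_contra hlt
            push_neg at hlt
            have hnadj2 : ¬ G.Adj v w := sep_nonadj hc (by omega)
            have h1 : s(v, w) ∈ M := nonadj_mem' (by rwa [hGdef] at hnadj2)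
              (by intro h; rw [h] at hlt; omega)
            exact hvy (partner_eq' hdisj h1 hMyw)
      have hcard2 : (containsF G c (k + 2*n)).card = 2*n - 1 := by
        rw [hseteq, Finset.card_erase_of_mem
          (Finset.mem_erase.2 ⟨hwy, Finset.mem_univ y⟩),
          Finset.card_erase_of_mem (Finset.mem_univ w), Finset.card_univ,
          Fintype.card_fin]
        omega
      rw [hcard2, Nat.even_iff] at hd2
      omega
    · -- Case A : no vertex starts above, pair sums to 2n+1
      push_neg at habove
      have h1 : containsF G c k = Finset.univ.filter (fun v => Av G c v ≤ k) := by
        ext v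
        rw [containsF, Finset.mem_filter, Finset.mem_filter]
        constructor
        · rintro ⟨hu, ha, -⟩; exact ⟨hu, ha⟩
        · rintro ⟨hu, ha⟩
          refine ⟨hu, ha, ?_⟩
          have := hyB v
          omega
      have h2 : containsF G c (k + 2*n)
          = Finset.univ.filter (fun v => ¬ (Av G c v ≤ k)) := by
        ext v
        rw [containsF, Finset.mem_filter, Finset.mem_filter]
        constructor
        · rintro ⟨hu, ha, hb⟩
          refine ⟨hu, ?_⟩
          intro hak
          have := (hno v).2 hak
          omega
        · rintro ⟨hu, ha⟩
          push_neg at ha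
          exact ⟨hu, habove v, (hno v).1 ha⟩
      have hq := Finset.card_filter_add_card_filter_not
        (s := (Finset.univ : Finset (Fin (2*n+1)))) (p := fun v => Av G c v ≤ k)
      rw [← h1, ← h2, Finset.card_univ, Fintype.card_fin] at hq
      rw [Nat.even_iff] at hd1 hd2
      omega
  -- STEP B : deadF.card ≤ 2m + DD
  have hstepB : (deadF.card : ℤ) ≤ 2 * m + DD := by
    have hsub : deadF ⊆ Finset.univ.biUnion (fun v => W.filter (fun k =>
        (k < Av G c v ∧ Bv G c v < k + 2*n) ∨ (Av G c v ≤ k ∧ k + 2*n ≤ Bv G c v))) := by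
      intro k hk
      rw [hdeadF, Finset.mem_filter] at hk
      obtain ⟨v, hv⟩ := main3 k hk.1 hk.2
      exact Finset.mem_biUnion.2 ⟨v, Finset.mem_univ v, Finset.mem_filter.2 ⟨hk.1, hv⟩⟩
    have hb := (Finset.card_le_card hsub).trans Finset.card_biUnion_le
    have hper : ∀ v : Fin (2*n+1), ((W.filter (fun k =>
        (k < Av G c v ∧ Bv G c v < k + 2*n) ∨ (Av G c v ≤ k ∧ k + 2*n ≤ Bv G c v))).card : ℤ)
        ≤ (if mtch n M v then 1 else 0)
          + (Bv G c v - Av G c v + 1 - (vSpectrum G c v).card) := by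
      intro v
      have hsub2 : W.filter (fun k =>
          (k < Av G c v ∧ Bv G c v < k + 2*n) ∨ (Av G c v ≤ k ∧ k + 2*n ≤ Bv G c v))
          ⊆ Finset.Icc (Bv G c v - 2*n + 1) (Av G c v - 1)
            ∪ Finset.Icc (Av G c v) (Bv G c v - 2*n) := by
        intro k hk
        rw [Finset.mem_filter] at hk
        rcases hk.2 with ⟨hx1, hx2⟩ | ⟨hx1, hx2⟩
        · exact Finset.mem_union_left _ (Finset.mem_Icc.2 ⟨by omega, by omega⟩)
        · exact Finset.mem_union_right _ (Finset.mem_Icc.2 ⟨hx1, by omega⟩)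
      have hcb := (Finset.card_le_card hsub2).trans (Finset.card_union_le _ _)
      have hc1 : ((Finset.Icc (Bv G c v - 2*n + 1) (Av G c v - 1)).card : ℤ)
          ≤ (if mtch n M v then 1 else 0) := by
        rw [Int.card_Icc, Int.toNat_eq_max]
        have h1 := hdlb v
        have h2 := span_ge (hne v)
        by_cases hm : mtch n M v
        · simp only [hm, if_true] at h1 ⊢
          rw [sup_le_iff]; constructor <;> omega
        · simp only [hm, if_false] at h1 ⊢
          rw [sup_le_iff]; constructor <;> omega
      have hc2 : ((Finset.Icc (Av G c v) (Bv G c v - 2*n)).card : ℤ)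
          ≤ Bv G c v - Av G c v + 1 - (vSpectrum G c v).card := by
        rw [Int.card_Icc, Int.toNat_eq_max]
        have h1 := hdub v
        have h2 := hDD0 v
        rw [sup_le_iff]; constructor <;> omega
      have hcb' : ((W.filter (fun k =>
          (k < Av G c v ∧ Bv G c v < k + 2*n) ∨ (Av G c v ≤ k ∧ k + 2*n ≤ Bv G c v))).card : ℤ)
          ≤ ((Finset.Icc (Bv G c v - 2*n + 1) (Av G c v - 1)).card : ℤ)
            + ((Finset.Icc (Av G c v) (Bv G c v - 2*n)).card : ℤ) := by
        exact_mod_cast hcb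
      calc _ ≤ _ := hcb'
        _ ≤ _ := add_le_add hc1 hc2
    have hsum : ((deadF.card : ℤ)) ≤ ∑ v : Fin (2*n+1), ((W.filter (fun k =>
        (k < Av G c v ∧ Bv G c v < k + 2*n) ∨ (Av G c v ≤ k ∧ k + 2*n ≤ Bv G c v))).card : ℤ) := by
      calc ((deadF.card : ℤ)) ≤ ((∑ v : Fin (2*n+1), (W.filter (fun k =>
          (k < Av G c v ∧ Bv G c v < k + 2*n) ∨ (Av G c v ≤ k ∧ k + 2*n ≤ Bv G c v))).card : ℕ) : ℤ) := by
            exact_mod_cast hb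
        _ = _ := by push_cast; ring
    have hepssum : (∑ v : Fin (2*n+1), (if mtch n M v then (1:ℤ) else 0)) = 2 * m := by
      rw [Finset.sum_boole]
      rw [mtch_card' hcard hM hdisj]
      push_cast; ring
    calc (deadF.card : ℤ) ≤ _ := hsum
      _ ≤ ∑ v : Fin (2*n+1), ((if mtch n M v then (1:ℤ) else 0)
            + (Bv G c v - Av G c v + 1 - (vSpectrum G c v).card)) :=
        Finset.sum_le_sum (fun v _ => hper v)
      _ = 2 * m + DD := by rw [Finset.sum_add_distrib, hepssum, hDD]
  -- FINALE
  have hWc : (aliveF.card : ℤ) + (deadF.card : ℤ) = 2 * n := by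
    rw [← hWcard]; exact_mod_cast congrArg (Nat.cast : ℕ → ℤ) hsplitW
  omega


end S16

theorem stmt_16 (n m : ℕ) (hm1 : 1 ≤ m) (hmn : m ≤ n)
    (M : Finset (Sym2 (Fin (2 * n + 1)))) (hcard : M.card = m)
    (hM : ∀ e ∈ M, ¬e.IsDiag)
    (hdisj : ∀ e ∈ M, ∀ f ∈ M, e ≠ f → ∀ v, v ∈ e → v ∉ f) :
    n - m ≤ graphDef ((SimpleGraph.completeGraph (Fin (2 * n + 1))).deleteEdges ↑M) := by
  classical
  have hGeq : (SimpleGraph.completeGraph (Fin (2 * n + 1))).deleteEdges ↑M = S16.Gg n M := rfl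
  rw [hGeq]
  -- an injective coloring is proper
  have hex : ∃ c, IsProperEdgeColoring (S16.Gg n M) c ∧ colDef (S16.Gg n M) c
      = colDef (S16.Gg n M) (fun e => (Fintype.equivFin (Sym2 (Fin (2 * n + 1)))) e) := by
    refine ⟨_, ?_, rfl⟩
    intro e he e' he' hne hshare hceq
    exact hne ((Fintype.equivFin (Sym2 (Fin (2 * n + 1)))).injective (Fin.val_injective hceq))
  unfold graphDef
  apply le_csInf
  · obtain ⟨c, hcp, hcd⟩ := hex
    exact ⟨_, c, hcp, rfl⟩
  · rintro b ⟨c, hcp, rfl⟩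
    have := S16.key hm1 hmn hcard hM hdisj c hcp
    omega
end

section
/- For all m, n ≥ 1, the complete tripartite graph K_{1,m,n} satisfies def(K_{1,m,n}) = 0 if gcd(m+1, n+1) = 1, and def(K_{1,m,n}) = 1 otherwise. -/
open scoped Classical

/-- Index of the part containing a vertex of `K_{1,m,n}`. -/
def partIdx {m n : ℕ} : Unit ⊕ Fin m ⊕ Fin n → ℕ
  | Sum.inl _ => 0
  | Sum.inr (Sum.inl _) => 1
  | Sum.inr (Sum.inr _) => 2

/-- The complete tripartite graph `K_{1,m,n}`. -/
def tripartiteK1 (m n : ℕ) : SimpleGraph (Unit ⊕ Fin m ⊕ Fin n) :=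
  SimpleGraph.fromRel (fun a b => partIdx a ≠ partIdx b)


lemma setDef_eq (S : Finset ℕ) (h : S.Nonempty) :
    setDef S = (S.max' h - S.min' h) - (S.card - 1) := by
  rw [setDef, ← Finset.coe_max' h, ← Finset.coe_min' h]
  rfl

lemma max'_Icc (a b : ℕ) (h : a ≤ b) (hne : (Finset.Icc a b).Nonempty) :
    (Finset.Icc a b).max' hne = b := by
  apply le_antisymm
  · exact Finset.max'_le _ _ _ (fun x hx => (Finset.mem_Icc.mp hx).2)
  · exact Finset.le_max' _ _ (Finset.mem_Icc.mpr ⟨h, le_rfl⟩)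

lemma min'_Icc (a b : ℕ) (h : a ≤ b) (hne : (Finset.Icc a b).Nonempty) :
    (Finset.Icc a b).min' hne = a := by
  apply le_antisymm
  · exact Finset.min'_le _ _ (Finset.mem_Icc.mpr ⟨le_rfl, h⟩)
  · exact Finset.le_min' _ _ _ (fun x hx => (Finset.mem_Icc.mp hx).1)

lemma setDef_Icc (a b : ℕ) (h : a ≤ b) : setDef (Finset.Icc a b) = 0 := by
  have hne : (Finset.Icc a b).Nonempty := ⟨a, Finset.mem_Icc.mpr ⟨le_rfl, h⟩⟩
  rw [setDef_eq _ hne, max'_Icc a b h, min'_Icc a b h, Nat.card_Icc]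
  omega

lemma eq_Icc_of_setDef_zero (S : Finset ℕ) (h : S.Nonempty) (hd : setDef S = 0) :
    S = Finset.Icc (S.min' h) (S.min' h + (S.card - 1)) := by
  have hsub : S ⊆ Finset.Icc (S.min' h) (S.max' h) :=
    fun x hx => Finset.mem_Icc.mpr ⟨Finset.min'_le _ _ hx, Finset.le_max' _ _ hx⟩
  have hlemm : S.min' h ≤ S.max' h := Finset.min'_le _ _ (S.max'_mem h)
  have hcard : S.card ≤ (S.max' h) - (S.min' h) + 1 := by
    have := Finset.card_le_card hsub
    rwa [Nat.card_Icc, Nat.sub_add_comm hlemm] at this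
  rw [setDef_eq _ h] at hd
  have hle : S.min' h ≤ S.max' h := hlemm
  have hc : 1 ≤ S.card := Finset.Nonempty.card_pos h
  have hmax : S.max' h = S.min' h + (S.card - 1) := by omega
  rw [← hmax]
  refine Finset.eq_of_subset_of_card_le hsub ?_
  rw [Nat.card_Icc]
  omega

/-! residue counting -/

def cntR (d r : ℕ) (S : Finset ℕ) : ℕ := (S.filter (fun x => x % d = r)).card

lemma cntR_union_Ico (d r a b c : ℕ) (h1 : a ≤ b) (h2 : b ≤ c) :
    cntR d r (Finset.Ico a c) = cntR d r (Finset.Ico a b) + cntR d r (Finset.Ico b c) := by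
  unfold cntR
  rw [← Finset.Ico_union_Ico_eq_Ico h1 h2, Finset.filter_union,
    Finset.card_union_of_disjoint]
  exact Finset.disjoint_filter_filter (Finset.Ico_disjoint_Ico_consecutive a b c)

lemma cntR_window_le (d r b s : ℕ) (hs : s ≤ d) : cntR d r (Finset.Ico b (b + s)) ≤ 1 := by
  apply Finset.card_le_one.mpr
  intro x hx y hy
  simp only [Finset.mem_filter, Finset.mem_Ico] at hx hy
  rcases le_total x y with hxy | hxy
  · have hdvd : d ∣ y - x := (Nat.modEq_iff_dvd' hxy).mp (hx.2.trans hy.2.symm)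
    rcases Nat.eq_zero_or_pos (y - x) with h0 | h0
    · omega
    · have := Nat.le_of_dvd h0 hdvd; omega
  · have hdvd : d ∣ x - y := (Nat.modEq_iff_dvd' hxy).mp (hy.2.trans hx.2.symm)
    rcases Nat.eq_zero_or_pos (x - y) with h0 | h0
    · omega
    · have := Nat.le_of_dvd h0 hdvd; omega

lemma window_mem (d r b : ℕ) (hd : 0 < d) (hr : r < d) :
    ∃ x, x ∈ Finset.Ico b (b + d) ∧ x % d = r := by
  have hdm := Nat.div_add_mod b d
  have hml : b % d < d := Nat.mod_lt _ hd
  have hy : (d * (b / d) + r) % d = r := by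
    rw [Nat.mul_add_mod]; exact Nat.mod_eq_of_lt hr
  rcases le_or_gt b (d * (b / d) + r) with hc | hc
  · exact ⟨d * (b / d) + r, Finset.mem_Ico.mpr ⟨hc, by omega⟩, hy⟩
  · refine ⟨d * (b / d) + r + d, Finset.mem_Ico.mpr ⟨by omega, by omega⟩, ?_⟩
    rw [Nat.add_mod_right]; exact hy

lemma cntR_window_eq (d r b : ℕ) (hd : 0 < d) (hr : r < d) :
    cntR d r (Finset.Ico b (b + d)) = 1 := by
  refine le_antisymm (cntR_window_le d r b d le_rfl) ?_
  obtain ⟨x, hx, hxr⟩ := window_mem d r b hd hr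
  have : x ∈ (Finset.Ico b (b + d)).filter (fun x => x % d = r) :=
    Finset.mem_filter.mpr ⟨hx, hxr⟩
  exact Finset.card_pos.mpr ⟨x, this⟩

lemma cntR_Ico_mul (d r k : ℕ) (hd : 0 < d) (hr : r < d) :
    ∀ a, cntR d r (Finset.Ico a (a + k * d)) = k := by
  induction k with
  | zero => intro a; simp [cntR]
  | succ k ih =>
    intro a
    have : a + (k+1) * d = (a + k * d) + d := by ring
    rw [this, cntR_union_Ico d r a (a + k * d) (a + k * d + d) (by omega) (by omega),
      ih a, cntR_window_eq d r _ hd hr]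

lemma cntR_Ico_of_dvd (d r a L : ℕ) (hd : 0 < d) (hr : r < d) (hL : d ∣ L) :
    cntR d r (Finset.Ico a (a + L)) = L / d := by
  obtain ⟨k, rfl⟩ := hL
  rw [mul_comm, cntR_Ico_mul d r k hd hr, Nat.mul_div_cancel _ hd]

lemma cntR_Ico_bounds (d r a L : ℕ) (hd : 0 < d) (hr : r < d) :
    ∃ e ≤ 1, cntR d r (Finset.Ico a (a + L)) = L / d + e := by
  have hdm := Nat.div_add_mod L d
  have hml : L % d < d := Nat.mod_lt _ hd
  have hsplit : cntR d r (Finset.Ico a (a + L)) =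
      cntR d r (Finset.Ico a (a + L / d * d)) +
      cntR d r (Finset.Ico (a + L / d * d) (a + L / d * d + L % d)) := by
    have hc : L / d * d = d * (L / d) := Nat.mul_comm _ _
    have h1 : a + L = a + L / d * d + L % d := by omega
    rw [h1]
    exact cntR_union_Ico d r a (a + L / d * d) _ (by omega) (by omega)
  rw [hsplit, cntR_Ico_mul d r _ hd hr]
  exact ⟨_, cntR_window_le d r _ _ (le_of_lt hml), rfl⟩

lemma sum_cntR (d : ℕ) (hd : 0 < d) (S : Finset ℕ) :
    ∑ r ∈ Finset.range d, cntR d r S = S.card := by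
  exact (Finset.card_eq_sum_card_fiberwise (f := fun x => x % d)
    (fun x _ => Finset.mem_range.mpr (Nat.mod_lt _ hd))).symm

/-! ### Graph-specific setup -/

open Finset

section Tri

variable {m n : ℕ}

def va : Unit ⊕ Fin m ⊕ Fin n := Sum.inl ()
def vb (i : Fin m) : Unit ⊕ Fin m ⊕ Fin n := Sum.inr (Sum.inl i)
def vc (j : Fin n) : Unit ⊕ Fin m ⊕ Fin n := Sum.inr (Sum.inr j)

lemma tri_adj (u v : Unit ⊕ Fin m ⊕ Fin n) :
    (tripartiteK1 m n).Adj u v ↔ partIdx u ≠ partIdx v := by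
  rw [tripartiteK1, SimpleGraph.fromRel_adj]
  constructor
  · rintro ⟨h1, h2 | h2⟩
    · exact h2
    · exact fun h => h2 h.symm
  · intro h
    exact ⟨fun he => h (congrArg partIdx he), Or.inl h⟩

@[simp] lemma adj_va_vb (i : Fin m) : (tripartiteK1 m n).Adj va (vb i) := by
  simp [tri_adj, va, vb, partIdx]
@[simp] lemma adj_va_vc (j : Fin n) : (tripartiteK1 m n).Adj va (vc j) := by
  simp [tri_adj, va, vc, partIdx]
@[simp] lemma adj_vb_va (i : Fin m) : (tripartiteK1 m n).Adj (vb i) va := by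
  simp [tri_adj, va, vb, partIdx]
@[simp] lemma adj_vc_va (j : Fin n) : (tripartiteK1 m n).Adj (vc j) va := by
  simp [tri_adj, va, vc, partIdx]
@[simp] lemma adj_vb_vc (i : Fin m) (j : Fin n) : (tripartiteK1 m n).Adj (vb i) (vc j) := by
  simp [tri_adj, vb, vc, partIdx]
@[simp] lemma adj_vc_vb (i : Fin m) (j : Fin n) : (tripartiteK1 m n).Adj (vc j) (vb i) := by
  simp [tri_adj, vb, vc, partIdx]
@[simp] lemma not_adj_va_va : ¬ (tripartiteK1 m n).Adj va va := by
  simp [tri_adj]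
@[simp] lemma not_adj_vb_vb (i i' : Fin m) : ¬ (tripartiteK1 m n).Adj (vb i) (vb i') := by
  simp [tri_adj, vb, partIdx]
@[simp] lemma not_adj_vc_vc (j j' : Fin n) : ¬ (tripartiteK1 m n).Adj (vc j) (vc j') := by
  simp [tri_adj, vc, partIdx]

/-- The coloring determined by `X` (colors of a–bᵢ edges), `Y` (colors of a–cⱼ edges),
and `i+j+1` on bᵢ–cⱼ edges. -/
def fXY (X : Fin m → ℕ) (Y : Fin n → ℕ) : (Unit ⊕ Fin m ⊕ Fin n) → (Unit ⊕ Fin m ⊕ Fin n) → ℕ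
  | Sum.inl _, Sum.inr (Sum.inl i) => X i
  | Sum.inr (Sum.inl i), Sum.inl _ => X i
  | Sum.inl _, Sum.inr (Sum.inr j) => Y j
  | Sum.inr (Sum.inr j), Sum.inl _ => Y j
  | Sum.inr (Sum.inl i), Sum.inr (Sum.inr j) => (i : ℕ) + (j : ℕ) + 1
  | Sum.inr (Sum.inr j), Sum.inr (Sum.inl i) => (i : ℕ) + (j : ℕ) + 1
  | _, _ => 0

lemma fXY_symm (X : Fin m → ℕ) (Y : Fin n → ℕ) :
    ∀ u v, fXY X Y u v = fXY X Y v u := by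
  rintro (_ | i | j) (_ | i' | j') <;> rfl

def colXY (X : Fin m → ℕ) (Y : Fin n → ℕ) : Sym2 (Unit ⊕ Fin m ⊕ Fin n) → ℕ :=
  Sym2.lift ⟨fXY X Y, fXY_symm X Y⟩

@[simp] lemma colXY_ab (X : Fin m → ℕ) (Y : Fin n → ℕ) (i : Fin m) :
    colXY X Y s(va, vb i) = X i := rfl
@[simp] lemma colXY_ba (X : Fin m → ℕ) (Y : Fin n → ℕ) (i : Fin m) :
    colXY X Y s(vb i, va) = X i := rfl
@[simp] lemma colXY_ac (X : Fin m → ℕ) (Y : Fin n → ℕ) (j : Fin n) :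
    colXY X Y s(va, vc j) = Y j := rfl
@[simp] lemma colXY_ca (X : Fin m → ℕ) (Y : Fin n → ℕ) (j : Fin n) :
    colXY X Y s(vc j, va) = Y j := rfl
@[simp] lemma colXY_bc (X : Fin m → ℕ) (Y : Fin n → ℕ) (i : Fin m) (j : Fin n) :
    colXY X Y s(vb i, vc j) = (i : ℕ) + (j : ℕ) + 1 := rfl
@[simp] lemma colXY_cb (X : Fin m → ℕ) (Y : Fin n → ℕ) (i : Fin m) (j : Fin n) :
    colXY X Y s(vc j, vb i) = (i : ℕ) + (j : ℕ) + 1 := rfl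

/-- Local criterion for proper edge colorings. -/
lemma isProper_of_local {V : Type*} (G : SimpleGraph V) (c : Sym2 V → ℕ)
    (h : ∀ v w w', G.Adj v w → G.Adj v w' → w ≠ w' → c s(v, w) ≠ c s(v, w')) :
    IsProperEdgeColoring G c := by
  intro e he e' he' hne hsh
  obtain ⟨v, hv, hv'⟩ := hsh
  induction e with
  | _ a b =>
  induction e' with
  | _ a' b' =>
  rw [SimpleGraph.mem_edgeSet] at he he'
  rcases Sym2.mem_iff.mp hv with rfl | rfl <;> rcases Sym2.mem_iff.mp hv' with rfl | rfl
  · exact h v b b' he he' (fun hb => hne (by rw [hb])) 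
  · rw [Sym2.eq_swap (a := a')]
    exact h v b a' he he'.symm (fun hb => hne (by rw [hb, Sym2.eq_swap]))
  · rw [Sym2.eq_swap (a := a)]
    exact h v a b' he.symm he' (fun hb => hne (by rw [← hb, Sym2.eq_swap]))
  · rw [Sym2.eq_swap (a := a), Sym2.eq_swap (a := a')]
    exact h v a a' he.symm he'.symm (fun hb => hne (by rw [Sym2.eq_swap, hb, Sym2.eq_swap]))

/-- A proper coloring is injective on the neighborhood of each vertex. -/
lemma color_injOn {V : Type*} (G : SimpleGraph V) (c : Sym2 V → ℕ)
    (hp : IsProperEdgeColoring G c) (v : V) :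
    ∀ w w', G.Adj v w → G.Adj v w' → c s(v, w) = c s(v, w') → w = w' := by
  intro w w' hw hw' hc
  by_contra hne
  refine hp s(v, w) (by rwa [SimpleGraph.mem_edgeSet]) s(v, w')
    (by rwa [SimpleGraph.mem_edgeSet]) ?_ ⟨v, Sym2.mem_mk_left v w, Sym2.mem_mk_left v w'⟩ hc
  intro hs
  exact hne (Sym2.congr_right.mp hs)

end Tri

section ColXY

open Finset
open scoped Classical

variable {m n : ℕ}

lemma spec_vb (X : Fin m → ℕ) (Y : Fin n → ℕ) (i : Fin m) :
    vSpectrum (tripartiteK1 m n) (colXY X Y) (vb i) =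
      insert (X i) (Finset.Icc ((i : ℕ) + 1) ((i : ℕ) + n)) := by
  ext x
  simp only [vSpectrum, Finset.mem_image, Finset.mem_filter, Finset.mem_univ, true_and,
    Finset.mem_insert, Finset.mem_Icc]
  constructor
  · rintro ⟨u, hadj, rfl⟩
    rcases u with ⟨⟩ | i' | j
    · left; rfl
    · exact absurd hadj (not_adj_vb_vb i i')
    · have := j.isLt
      show (i : ℕ) + (j : ℕ) + 1 = X i ∨
        ((i : ℕ) + 1 ≤ (i : ℕ) + (j : ℕ) + 1 ∧ (i : ℕ) + (j : ℕ) + 1 ≤ (i : ℕ) + n)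
      right; omega
  · rintro (rfl | ⟨h1, h2⟩)
    · exact ⟨va, adj_vb_va i, rfl⟩
    · refine ⟨vc ⟨x - (i : ℕ) - 1, by omega⟩, adj_vb_vc i _, ?_⟩
      show (i : ℕ) + (x - (i : ℕ) - 1) + 1 = x
      omega

lemma spec_vc (X : Fin m → ℕ) (Y : Fin n → ℕ) (j : Fin n) :
    vSpectrum (tripartiteK1 m n) (colXY X Y) (vc j) =
      insert (Y j) (Finset.Icc ((j : ℕ) + 1) ((j : ℕ) + m)) := by
  ext x
  simp only [vSpectrum, Finset.mem_image, Finset.mem_filter, Finset.mem_univ, true_and,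
    Finset.mem_insert, Finset.mem_Icc]
  constructor
  · rintro ⟨u, hadj, rfl⟩
    rcases u with ⟨⟩ | i | j'
    · left; rfl
    · have := i.isLt
      show (i : ℕ) + (j : ℕ) + 1 = Y j ∨
        ((j : ℕ) + 1 ≤ (i : ℕ) + (j : ℕ) + 1 ∧ (i : ℕ) + (j : ℕ) + 1 ≤ (j : ℕ) + m)
      right; omega
    · exact absurd hadj (not_adj_vc_vc j j')
  · rintro (rfl | ⟨h1, h2⟩)
    · exact ⟨va, adj_vc_va j, rfl⟩
    · refine ⟨vb ⟨x - (j : ℕ) - 1, by omega⟩, adj_vc_vb _ j, ?_⟩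
      show (x - (j : ℕ) - 1) + (j : ℕ) + 1 = x
      omega

lemma spec_va (X : Fin m → ℕ) (Y : Fin n → ℕ) :
    vSpectrum (tripartiteK1 m n) (colXY X Y) va =
      (Finset.univ.image X) ∪ (Finset.univ.image Y) := by
  ext x
  simp only [vSpectrum, Finset.mem_image, Finset.mem_filter, Finset.mem_univ, true_and,
    Finset.mem_union]
  constructor
  · rintro ⟨u, hadj, rfl⟩
    rcases u with ⟨⟩ | i | j
    · exact absurd hadj not_adj_va_va
    · exact Or.inl ⟨i, rfl⟩
    · exact Or.inr ⟨j, rfl⟩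
  · rintro (⟨i, rfl⟩ | ⟨j, rfl⟩)
    · exact ⟨vb i, adj_va_vb i, rfl⟩
    · exact ⟨vc j, adj_va_vc j, rfl⟩

lemma colXY_proper (X : Fin m → ℕ) (Y : Fin n → ℕ)
    (hX : ∀ i : Fin m, X i = (i : ℕ) ∨ X i = (i : ℕ) + n + 1)
    (hY : ∀ j : Fin n, Y j = (j : ℕ) ∨ Y j = (j : ℕ) + m + 1)
    (hXinj : Function.Injective X) (hYinj : Function.Injective Y)
    (hXY : ∀ i j, X i ≠ Y j) :
    IsProperEdgeColoring (tripartiteK1 m n) (colXY X Y) := by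
  apply isProper_of_local
  rintro v w w' hadj hadj' hne
  rw [tri_adj] at hadj hadj'
  rcases v with ⟨⟩ | i | j <;> rcases w with ⟨⟩ | i' | j' <;> rcases w' with ⟨⟩ | i'' | j''
  all_goals try exact absurd rfl hadj
  all_goals try exact absurd rfl hadj'
  -- v = va
  · show X i' ≠ X i''
    exact fun h => hne (by rw [hXinj h])
  · show X i' ≠ Y j''
    exact hXY i' j''
  · show Y j' ≠ X i''
    exact (hXY i'' j').symm
  · show Y j' ≠ Y j''
    exact fun h => hne (by rw [hYinj h])
  -- v = vb i
  · exact (hne (by rfl)).elim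
  · show X i ≠ (i : ℕ) + (j'' : ℕ) + 1
    have := j''.isLt
    rcases hX i with h | h <;> omega
  · show (i : ℕ) + (j' : ℕ) + 1 ≠ X i
    have := j'.isLt
    rcases hX i with h | h <;> omega
  · show (i : ℕ) + (j' : ℕ) + 1 ≠ (i : ℕ) + (j'' : ℕ) + 1
    intro h
    apply hne
    have : j' = j'' := Fin.ext (by omega)
    rw [this]
  -- v = vc j
  · exact (hne (by rfl)).elim
  · show Y j ≠ (i'' : ℕ) + (j : ℕ) + 1
    have := i''.isLt
    rcases hY j with h | h <;> omega
  · show (i' : ℕ) + (j : ℕ) + 1 ≠ Y j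
    have := i'.isLt
    rcases hY j with h | h <;> omega
  · show (i' : ℕ) + (j : ℕ) + 1 ≠ (i'' : ℕ) + (j : ℕ) + 1
    intro h
    apply hne
    have : i' = i'' := Fin.ext (by omega)
    rw [this]

lemma setDef_spec_vb (X : Fin m → ℕ) (Y : Fin n → ℕ) (hn : 1 ≤ n) (i : Fin m)
    (hXi : X i = (i : ℕ) ∨ X i = (i : ℕ) + n + 1) :
    setDef (vSpectrum (tripartiteK1 m n) (colXY X Y) (vb i)) = 0 := by
  rw [spec_vb]
  rcases hXi with h | h <;> rw [h]
  · have : insert (i : ℕ) (Finset.Icc ((i : ℕ) + 1) ((i : ℕ) + n)) =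
        Finset.Icc (i : ℕ) ((i : ℕ) + n) := by
      ext x; simp only [Finset.mem_insert, Finset.mem_Icc]; omega
    rw [this]; exact setDef_Icc _ _ (by omega)
  · have : insert ((i : ℕ) + n + 1) (Finset.Icc ((i : ℕ) + 1) ((i : ℕ) + n)) =
        Finset.Icc ((i : ℕ) + 1) ((i : ℕ) + n + 1) := by
      ext x; simp only [Finset.mem_insert, Finset.mem_Icc]; omega
    rw [this]; exact setDef_Icc _ _ (by omega)

lemma setDef_spec_vc (X : Fin m → ℕ) (Y : Fin n → ℕ) (hm : 1 ≤ m) (j : Fin n)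
    (hYj : Y j = (j : ℕ) ∨ Y j = (j : ℕ) + m + 1) :
    setDef (vSpectrum (tripartiteK1 m n) (colXY X Y) (vc j)) = 0 := by
  rw [spec_vc]
  rcases hYj with h | h <;> rw [h]
  · have : insert (j : ℕ) (Finset.Icc ((j : ℕ) + 1) ((j : ℕ) + m)) =
        Finset.Icc (j : ℕ) ((j : ℕ) + m) := by
      ext x; simp only [Finset.mem_insert, Finset.mem_Icc]; omega
    rw [this]; exact setDef_Icc _ _ (by omega)
  · have : insert ((j : ℕ) + m + 1) (Finset.Icc ((j : ℕ) + 1) ((j : ℕ) + m)) =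
        Finset.Icc ((j : ℕ) + 1) ((j : ℕ) + m + 1) := by
      ext x; simp only [Finset.mem_insert, Finset.mem_Icc]; omega
    rw [this]; exact setDef_Icc _ _ (by omega)

lemma colDef_colXY (X : Fin m → ℕ) (Y : Fin n → ℕ) :
    colDef (tripartiteK1 m n) (colXY X Y) =
      setDef (vSpectrum (tripartiteK1 m n) (colXY X Y) va) +
      (∑ i : Fin m, setDef (vSpectrum (tripartiteK1 m n) (colXY X Y) (vb i)) +
       ∑ j : Fin n, setDef (vSpectrum (tripartiteK1 m n) (colXY X Y) (vc j))) := by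
  rw [colDef, Fintype.sum_sum_type, Fintype.sum_sum_type]
  rfl

end ColXY

section Def1

open Finset
open scoped Classical

variable {m n : ℕ}

lemma exists_colDef_one (hm : 1 ≤ m) (hn : 1 ≤ n) :
    ∃ c, IsProperEdgeColoring (tripartiteK1 m n) c ∧ colDef (tripartiteK1 m n) c = 1 := by
  set X : Fin m → ℕ := fun i => (i : ℕ) + n + 1 with hXdef
  set Y : Fin n → ℕ := fun j => (j : ℕ) with hYdef
  have hX : ∀ i : Fin m, X i = (i : ℕ) ∨ X i = (i : ℕ) + n + 1 := fun i => Or.inr rfl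
  have hY : ∀ j : Fin n, Y j = (j : ℕ) ∨ Y j = (j : ℕ) + m + 1 := fun j => Or.inl rfl
  have hXinj : Function.Injective X := by
    intro a b h; exact Fin.ext (by simpa [hXdef] using h)
  have hYinj : Function.Injective Y := by
    intro a b h; exact Fin.ext (by simpa [hYdef] using h)
  have hXY : ∀ i j, X i ≠ Y j := by
    intro i j
    have := j.isLt
    simp only [hXdef, hYdef]
    omega
  refine ⟨colXY X Y, colXY_proper X Y hX hY hXinj hYinj hXY, ?_⟩
  rw [colDef_colXY]
  have h1 : ∀ i : Fin m, setDef (vSpectrum (tripartiteK1 m n) (colXY X Y) (vb i)) = 0 :=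
    fun i => setDef_spec_vb X Y hn i (hX i)
  have h2 : ∀ j : Fin n, setDef (vSpectrum (tripartiteK1 m n) (colXY X Y) (vc j)) = 0 :=
    fun j => setDef_spec_vc X Y hm j (hY j)
  rw [Finset.sum_congr rfl (fun i _ => h1 i), Finset.sum_congr rfl (fun j _ => h2 j)]
  simp only [Finset.sum_const_zero, add_zero]
  -- compute the spectrum of va
  have hspec : vSpectrum (tripartiteK1 m n) (colXY X Y) va =
      (Finset.Icc 0 (m + n)).erase n := by
    rw [spec_va]
    ext x
    simp only [Finset.mem_union, Finset.mem_image, Finset.mem_univ, true_and,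
      Finset.mem_erase, Finset.mem_Icc, hXdef, hYdef]
    constructor
    · rintro (⟨i, rfl⟩ | ⟨j, rfl⟩)
      · have := i.isLt; omega
      · have := j.isLt; omega
    · rintro ⟨hne, -, hle⟩
      rcases le_or_gt x (n - 1) with h | h
      · exact Or.inr ⟨⟨x, by omega⟩, rfl⟩
      · refine Or.inl ⟨⟨x - n - 1, by omega⟩, ?_⟩
        show (x - n - 1) + n + 1 = x
        omega
  rw [hspec]
  have hne : ((Finset.Icc 0 (m + n)).erase n).Nonempty :=
    ⟨0, Finset.mem_erase.mpr ⟨by omega, Finset.mem_Icc.mpr (by omega)⟩⟩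
  rw [setDef_eq _ hne]
  have hmin : ((Finset.Icc 0 (m + n)).erase n).min' hne = 0 := by
    apply le_antisymm
    · exact Finset.min'_le _ _ (Finset.mem_erase.mpr ⟨by omega, Finset.mem_Icc.mpr (by omega)⟩)
    · exact Nat.zero_le _
  have hmax : ((Finset.Icc 0 (m + n)).erase n).max' hne = m + n := by
    apply le_antisymm
    · apply Finset.max'_le
      intro x hx
      exact (Finset.mem_Icc.mp (Finset.mem_of_mem_erase hx)).2
    · exact Finset.le_max' _ _
        (Finset.mem_erase.mpr ⟨by omega, Finset.mem_Icc.mpr (by omega)⟩)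
  have hcard : ((Finset.Icc 0 (m + n)).erase n).card = m + n := by
    rw [Finset.card_erase_of_mem (Finset.mem_Icc.mpr (by omega)), Nat.card_Icc]
    omega
  rw [hmin, hmax, hcard]
  omega

end Def1

/-! ### Discrete logarithm machinery -/

def kk (N w v : ℕ) : ℕ := (v * w) % N

lemma kk_lt (N w v : ℕ) (hN : 0 < N) : kk N w v < N := Nat.mod_lt _ hN

lemma kk_spec (p N w : ℕ) (hN : 2 ≤ N) (hw : p * w % N = 1) (v : ℕ) :
    kk N w v * p ≡ v [MOD N] := by
  have hpw : p * w ≡ 1 [MOD N] := by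
    show (p * w) % N = 1 % N
    rw [hw, Nat.mod_eq_of_lt (by omega)]
  calc kk N w v * p ≡ (v * w) * p [MOD N] := (Nat.mod_modEq _ _).mul_right p
    _ = v * (p * w) := by ring
    _ ≡ v * 1 [MOD N] := hpw.mul_left v
    _ = v := mul_one v

lemma kk_unique (p N w : ℕ) (hN : 2 ≤ N) (hw : p * w % N = 1) {v t : ℕ}
    (ht : t < N) (h : v ≡ t * p [MOD N]) : kk N w v = t := by
  have hpw : p * w ≡ 1 [MOD N] := by
    show (p * w) % N = 1 % N
    rw [hw, Nat.mod_eq_of_lt (by omega)]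
  have h2 : v * w ≡ t [MOD N] := by
    calc v * w ≡ (t * p) * w [MOD N] := h.mul_right w
      _ = t * (p * w) := by ring
      _ ≡ t * 1 [MOD N] := hpw.mul_left t
      _ = t := mul_one t
  show (v * w) % N = t
  rw [h2]
  exact Nat.mod_eq_of_lt ht

lemma kk_inj (p N w : ℕ) (hN : 2 ≤ N) (hw : p * w % N = 1) {v v' : ℕ}
    (hv : v < N) (hv' : v' < N) (h : kk N w v = kk N w v') : v = v' := by
  have h1 := kk_spec p N w hN hw v
  have h2 := kk_spec p N w hN hw v'
  rw [h] at h1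
  have h3 : v ≡ v' [MOD N] := h1.symm.trans h2
  have h4 : v % N = v' % N := h3
  rwa [Nat.mod_eq_of_lt hv, Nat.mod_eq_of_lt hv'] at h4

lemma mod_helper (c x : ℕ) (h1 : 1 ≤ x) (h2 : x < c + 2) :
    (x + (c + 1)) % (c + 2) = x - 1 := by
  have h3 : x + (c + 1) = (x - 1) + (c + 2) := by omega
  rw [h3, Nat.add_mod_right]
  exact Nat.mod_eq_of_lt (by omega)

section Gcd1

open Finset
open scoped Classical

lemma exists_colDef_zero {m n : ℕ} (hm : 1 ≤ m) (hn : 1 ≤ n)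
    (hco : Nat.gcd (m + 1) (n + 1) = 1) :
    ∃ c, IsProperEdgeColoring (tripartiteK1 m n) c ∧ colDef (tripartiteK1 m n) c = 0 := by
  have hcop : Nat.Coprime (m + 1) (m + n + 2) := by
    have h : m + n + 2 = (n + 1) + (m + 1) := by ring
    rw [h]
    exact (Nat.coprime_add_self_right).mpr hco
  obtain ⟨w, -, hw⟩ := Nat.exists_mul_mod_eq_one_of_coprime hcop (by omega)
  set K : ℕ → ℕ := kk (m + n + 2) w with hKdef
  have hN2 : 2 ≤ m + n + 2 := by omega
  have hlt : ∀ v, K v < m + n + 2 := fun v => kk_lt _ _ _ (by omega)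
  have hspec : ∀ v, K v * (m + 1) ≡ v [MOD m + n + 2] := kk_spec (m + 1) _ w hN2 hw
  have huniq : ∀ {v t : ℕ}, t < m + n + 2 → v ≡ t * (m + 1) [MOD m + n + 2] → K v = t :=
    fun ht h => kk_unique (m + 1) _ w hN2 hw ht h
  have hinj : ∀ {v v' : ℕ}, v < m + n + 2 → v' < m + n + 2 → K v = K v' → v = v' :=
    fun hv hv' h => kk_inj (m + 1) _ w hN2 hw hv hv' h
  have hQ : (n + 1) ≡ (m + n + 1) * (m + 1) [MOD m + n + 2] := by
    have h0 : (n + 1) + (m + 1) ≡ (m + n + 1) * (m + 1) + (m + 1) [MOD m + n + 2] := by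
      have e1 : (n + 1) + (m + 1) = m + n + 2 := by ring
      have e2 : (m + n + 1) * (m + 1) + (m + 1) = (m + n + 2) * (m + 1) := by ring
      rw [e1, e2]
      have d1 : (m + n + 2) ≡ 0 [MOD m + n + 2] := Nat.modEq_zero_iff_dvd.mpr dvd_rfl
      have d2 : (0 : ℕ) ≡ (m + n + 2) * (m + 1) [MOD m + n + 2] :=
        (Nat.modEq_zero_iff_dvd.mpr (dvd_mul_right _ _)).symm
      exact d1.trans d2
    exact h0.add_right_cancel' _
  have hKq : ∀ v, K (v + (n + 1)) = (K v + (m + n + 1)) % (m + n + 2) := by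
    intro v
    apply huniq (Nat.mod_lt _ (by omega))
    calc v + (n + 1) ≡ K v * (m + 1) + (m + n + 1) * (m + 1) [MOD m + n + 2] :=
          (hspec v).symm.add hQ
      _ = (K v + (m + n + 1)) * (m + 1) := by ring
      _ ≡ ((K v + (m + n + 1)) % (m + n + 2)) * (m + 1) [MOD m + n + 2] :=
          (Nat.mod_modEq _ _).symm.mul_right _
  have hKp : ∀ v, K (v + (m + 1)) = (K v + 1) % (m + n + 2) := by
    intro v
    apply huniq (Nat.mod_lt _ (by omega))
    calc v + (m + 1) ≡ K v * (m + 1) + (m + 1) [MOD m + n + 2] :=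
          (hspec v).symm.add_right _
      _ = (K v + 1) * (m + 1) := by ring
      _ ≡ ((K v + 1) % (m + n + 2)) * (m + 1) [MOD m + n + 2] :=
          (Nat.mod_modEq _ _).symm.mul_right _
  have hK0 : K 0 = 0 := by
    show (0 * w) % (m + n + 2) = 0
    simp
  have hKz : ∀ v, v < m + n + 2 → K v = 0 → v = 0 := by
    intro v hv h
    exact hinj hv (by omega) (by rw [h, hK0])
  have hk0lt : K (m + n + 1) < m + n + 2 := hlt _
  have hk0ne0 : K (m + n + 1) ≠ 0 := by
    intro h
    have := hKz (m + n + 1) (by omega) h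
    omega
  have hKm1 : K (m + 1) = 1 := by
    apply huniq (by omega)
    rw [one_mul]
  have hk0ne1 : K (m + n + 1) ≠ 1 := by
    intro h
    have : m + n + 1 = m + 1 := hinj (by omega) (by omega) (by rw [h, hKm1])
    omega
  have hKn : K n = K (m + n + 1) - 1 := by
    apply huniq (by omega)
    have h1 : n + (m + 1) ≡ (K (m + n + 1) - 1) * (m + 1) + (m + 1) [MOD m + n + 2] := by
      have e : (K (m + n + 1) - 1) * (m + 1) + (m + 1) = K (m + n + 1) * (m + 1) := by
        have e2 : K (m + n + 1) - 1 + 1 = K (m + n + 1) := by omega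
        calc (K (m + n + 1) - 1) * (m + 1) + (m + 1)
            = ((K (m + n + 1) - 1) + 1) * (m + 1) := by ring
          _ = K (m + n + 1) * (m + 1) := by rw [e2]
      have e3 : n + (m + 1) = m + n + 1 := by ring
      rw [e, e3]
      exact (hspec (m + n + 1)).symm
    exact h1.add_right_cancel' _
  -- the values of K on small inputs
  have hKiLt : ∀ i : Fin m, (i : ℕ) < m + n + 2 := fun i => by have := i.isLt; omega
  have hKjLt : ∀ j : Fin n, (j : ℕ) < m + n + 2 := fun j => by have := j.isLt; omega
  -- F1 / F2 for X
  have hXhighK : ∀ i : Fin m, ¬(1 ≤ K i ∧ K i ≤ K (m + n + 1) - 1) →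
      K (m + n + 1) ≤ K ((i : ℕ) + (n + 1)) := by
    intro i h
    have hik0 : K i ≠ K (m + n + 1) := by
      intro he
      have := hinj (hKiLt i) (by omega) he
      have := i.isLt
      omega
    have hcase : K (i : ℕ) = 0 ∨ K (m + n + 1) + 1 ≤ K i := by omega
    rw [hKq (i : ℕ)]
    rcases hcase with h0 | h1
    · rw [h0, zero_add, Nat.mod_eq_of_lt (by omega)]
      omega
    · rw [mod_helper (m + n) _ (by omega) (hlt _)]
      omega
  -- F3 / F4 for Y
  have hYhighK : ∀ j : Fin n, K j ≤ K (m + n + 1) - 2 →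
      1 ≤ K ((j : ℕ) + (m + 1)) ∧ K ((j : ℕ) + (m + 1)) ≤ K (m + n + 1) - 1 := by
    intro j h
    rw [hKp (j : ℕ), Nat.mod_eq_of_lt (by omega)]
    omega
  have hYlowK : ∀ j : Fin n, ¬(K j ≤ K (m + n + 1) - 2) → K (m + n + 1) + 1 ≤ K j := by
    intro j h
    have h1 : K j ≠ K (m + n + 1) - 1 := by
      intro he
      have : (j : ℕ) = n := hinj (hKjLt j) (by omega) (by rw [he, hKn])
      have := j.isLt
      omega
    have h2 : K j ≠ K (m + n + 1) := by
      intro he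
      have := hinj (hKjLt j) (by omega) he
      have := j.isLt
      omega
    omega
  -- the choice functions
  set X : Fin m → ℕ :=
    fun i => if 1 ≤ K i ∧ K i ≤ K (m + n + 1) - 1 then (i : ℕ) else (i : ℕ) + n + 1 with hXd
  set Y : Fin n → ℕ :=
    fun j => if K j ≤ K (m + n + 1) - 2 then (j : ℕ) + m + 1 else (j : ℕ) with hYd
  have hX : ∀ i : Fin m, X i = (i : ℕ) ∨ X i = (i : ℕ) + n + 1 := by
    intro i; rw [hXd]; dsimp only; split_ifs <;> [left; right] <;> rfl
  have hY : ∀ j : Fin n, Y j = (j : ℕ) ∨ Y j = (j : ℕ) + m + 1 := by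
    intro j; rw [hYd]; dsimp only; split_ifs <;> [right; left] <;> rfl
  -- basic bounds
  have hXlow1 : ∀ i : Fin m, 1 ≤ K i → 1 ≤ (i : ℕ) := by
    intro i h
    rcases Nat.eq_zero_or_pos (i : ℕ) with h0 | h1
    · rw [h0] at h; rw [hK0] at h; omega
    · exact h1
  have hYlow1 : ∀ j : Fin n, 1 ≤ K j → 1 ≤ (j : ℕ) := by
    intro j h
    rcases Nat.eq_zero_or_pos (j : ℕ) with h0 | h1
    · rw [h0] at h; rw [hK0] at h; omega
    · exact h1
  -- injectivity
  have hXinj : Function.Injective X := by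
    intro a b h
    rw [hXd] at h; dsimp only at h
    have hak := hXhighK a
    have hbk := hXhighK b
    split_ifs at h with c1 c2 c2
    · exact Fin.ext h
    · -- a low, b high : (a:ℕ) = b + n + 1
      exfalso
      have e : (a : ℕ) = (b : ℕ) + (n + 1) := by omega
      have : K a = K ((b : ℕ) + (n + 1)) := by rw [← e]
      have := hbk c2
      omega
    · exfalso
      have e : (b : ℕ) = (a : ℕ) + (n + 1) := by omega
      have : K b = K ((a : ℕ) + (n + 1)) := by rw [← e]
      have := hak c1
      omega
    · exact Fin.ext (by omega)
  have hYinj : Function.Injective Y := by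
    intro a b h
    rw [hYd] at h; dsimp only at h
    split_ifs at h with c1 c2 c2
    · exact Fin.ext (by omega)
    · -- a high, b low : a + m + 1 = (b:ℕ)
      exfalso
      have e : (b : ℕ) = (a : ℕ) + (m + 1) := by omega
      have hKe : K b = K ((a : ℕ) + (m + 1)) := by rw [← e]
      have h1 := hYhighK a c1
      have h2 := hYlowK b c2
      omega
    · exfalso
      have e : (a : ℕ) = (b : ℕ) + (m + 1) := by omega
      have hKe : K a = K ((b : ℕ) + (m + 1)) := by rw [← e]
      have h1 := hYhighK b c2
      have h2 := hYlowK a c1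
      omega
    · exact Fin.ext (by omega)
  have hXY : ∀ (i : Fin m) (j : Fin n), X i ≠ Y j := by
    intro a b h
    rw [hXd, hYd] at h; dsimp only at h
    split_ifs at h with c1 c2 c2
    · -- a low, b high
      have := a.isLt; omega
    · -- a low, b low
      have hKe : K (a : ℕ) = K (b : ℕ) := by rw [h]
      have h2 := hYlowK b c2
      omega
    · -- a high, b high
      have e : (a : ℕ) + (n + 1) = (b : ℕ) + (m + 1) := by omega
      have hKe : K ((a : ℕ) + (n + 1)) = K ((b : ℕ) + (m + 1)) := by rw [e]
      have h1 := hXhighK a c1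
      have h2 := hYhighK b c2
      omega
    · -- a high, b low
      have := b.isLt; omega
  have hXbound : ∀ a : Fin m, 1 ≤ X a ∧ X a ≤ m + n := by
    intro a
    rw [hXd]; dsimp only
    have := a.isLt
    split_ifs with c
    · have := hXlow1 a c.1; omega
    · omega
  have hYbound : ∀ b : Fin n, 1 ≤ Y b ∧ Y b ≤ m + n := by
    intro b
    rw [hYd]; dsimp only
    have := b.isLt
    split_ifs with c
    · omega
    · have h1 := hYlowK b c
      have h2 := hYlow1 b (by omega)
      omega
  have hdisj : Disjoint (Finset.univ.image X) (Finset.univ.image Y) := by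
    rw [Finset.disjoint_left]
    rintro x hx hy
    obtain ⟨a, -, rfl⟩ := Finset.mem_image.mp hx
    obtain ⟨b, -, hba⟩ := Finset.mem_image.mp hy
    exact hXY a b hba.symm
  have himg : (Finset.univ.image X) ∪ (Finset.univ.image Y) = Finset.Icc 1 (m + n) := by
    apply Finset.eq_of_subset_of_card_le
    · intro x hx
      rw [Finset.mem_union] at hx
      rcases hx with hx | hx
      · obtain ⟨a, -, rfl⟩ := Finset.mem_image.mp hx
        have := hXbound a
        rw [Finset.mem_Icc]
        omega
      · obtain ⟨b, -, rfl⟩ := Finset.mem_image.mp hx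
        have := hYbound b
        rw [Finset.mem_Icc]
        omega
    · rw [Nat.card_Icc, Finset.card_union_of_disjoint hdisj,
        Finset.card_image_of_injective _ hXinj, Finset.card_image_of_injective _ hYinj,
        Finset.card_univ, Finset.card_univ, Fintype.card_fin, Fintype.card_fin]
      omega
  refine ⟨colXY X Y, colXY_proper X Y hX hY hXinj hYinj hXY, ?_⟩
  rw [colDef_colXY]
  rw [Finset.sum_congr rfl (fun i _ => setDef_spec_vb X Y hn i (hX i)),
      Finset.sum_congr rfl (fun j _ => setDef_spec_vc X Y hm j (hY j))]
  simp only [Finset.sum_const_zero, add_zero]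
  rw [spec_va, himg]
  exact setDef_Icc 1 (m + n) (by omega)

end Gcd1

section LowerBoundGeneric

open Finset
open scoped Classical

variable {V : Type*} [Fintype V]

lemma spec_card (G : SimpleGraph V) (c : Sym2 V → ℕ) (hp : IsProperEdgeColoring G c) (v : V) :
    (vSpectrum G c v).card = (Finset.univ.filter (fun u => G.Adj v u)).card := by
  rw [vSpectrum]
  apply Finset.card_image_of_injOn
  intro x hx y hy hxy
  simp only [Finset.coe_filter, Finset.mem_univ, true_and, Set.mem_setOf_eq] at hx hy
  exact color_injOn G c hp v x y hx hy hxy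

lemma cntR_spec (G : SimpleGraph V) (c : Sym2 V → ℕ) (hp : IsProperEdgeColoring G c) (v : V)
    (d r : ℕ) :
    cntR d r (vSpectrum G c v) =
      ∑ u : V, if G.Adj v u ∧ c s(v, u) % d = r then 1 else 0 := by
  rw [vSpectrum, cntR, Finset.filter_image]
  rw [Finset.card_image_of_injOn]
  · rw [Finset.filter_filter, Finset.card_filter]
  · intro x hx y hy hxy
    simp only [Finset.coe_filter, Finset.mem_univ, true_and, Set.mem_setOf_eq,
      Finset.mem_filter] at hx hy
    exact color_injOn G c hp v x y hx.1 hy.1 hxy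

end LowerBoundGeneric

section LowerBound

open Finset
open scoped Classical

variable {m n : ℕ}

lemma deg_va :
    (Finset.univ.filter (fun u => (tripartiteK1 m n).Adj va u)).card = m + n := by
  rw [Finset.card_filter, Fintype.sum_sum_type, Fintype.sum_sum_type]
  simp [tri_adj, partIdx, va]

lemma deg_vb (i : Fin m) :
    (Finset.univ.filter (fun u => (tripartiteK1 m n).Adj (vb i) u)).card = n + 1 := by
  rw [Finset.card_filter, Fintype.sum_sum_type, Fintype.sum_sum_type]
  simp [tri_adj, partIdx, vb]
  omega

lemma deg_vc (j : Fin n) :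
    (Finset.univ.filter (fun u => (tripartiteK1 m n).Adj (vc j) u)).card = m + 1 := by
  rw [Finset.card_filter, Fintype.sum_sum_type, Fintype.sum_sum_type]
  simp [tri_adj, partIdx, vc]
  omega

end LowerBound

section LowerBoundMain

open Finset
open scoped Classical

variable {m n : ℕ}

lemma expand_cnt (c : Sym2 (Unit ⊕ Fin m ⊕ Fin n) → ℕ)
    (hp : IsProperEdgeColoring (tripartiteK1 m n) c) (d r : ℕ)
    (v : Unit ⊕ Fin m ⊕ Fin n) :
    cntR d r (vSpectrum (tripartiteK1 m n) c v) =
      (if (tripartiteK1 m n).Adj v va ∧ c s(v, va) % d = r then 1 else 0) +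
      ((∑ i : Fin m, if (tripartiteK1 m n).Adj v (vb i) ∧ c s(v, vb i) % d = r then 1 else 0) +
       (∑ j : Fin n, if (tripartiteK1 m n).Adj v (vc j) ∧ c s(v, vc j) % d = r then 1 else 0)) := by
  rw [cntR_spec (tripartiteK1 m n) c hp v d r, Fintype.sum_sum_type, Fintype.sum_sum_type,
    Fintype.sum_unique]
  rfl

lemma no_colDef_zero (hm : 1 ≤ m) (hn : 1 ≤ n)
    (hco : Nat.gcd (m + 1) (n + 1) ≠ 1) (c : Sym2 (Unit ⊕ Fin m ⊕ Fin n) → ℕ)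
    (hp : IsProperEdgeColoring (tripartiteK1 m n) c) :
    colDef (tripartiteK1 m n) c ≠ 0 := by
  intro hzero
  have hdpos : 0 < Nat.gcd (m + 1) (n + 1) := Nat.gcd_pos_of_pos_left _ (by omega)
  set d := Nat.gcd (m + 1) (n + 1) with hdd
  have hd2 : 2 ≤ d := by omega
  obtain ⟨p', hp'⟩ : d ∣ m + 1 := Nat.gcd_dvd_left _ _
  obtain ⟨q', hq'⟩ : d ∣ n + 1 := Nat.gcd_dvd_right _ _
  rw [colDef] at hzero
  have hall : ∀ v, setDef (vSpectrum (tripartiteK1 m n) c v) = 0 :=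
    fun v => (Finset.sum_eq_zero_iff.mp hzero) v (Finset.mem_univ v)
  -- spectra are intervals
  have hspecIco : ∀ (v : Unit ⊕ Fin m ⊕ Fin n) (k : ℕ),
      (Finset.univ.filter (fun u => (tripartiteK1 m n).Adj v u)).card = k → 1 ≤ k →
      ∃ a, vSpectrum (tripartiteK1 m n) c v = Finset.Ico a (a + k) := by
    intro v k hdeg hk
    have hcard : (vSpectrum (tripartiteK1 m n) c v).card = k := by
      rw [spec_card _ _ hp, hdeg]
    have hne : (vSpectrum (tripartiteK1 m n) c v).Nonempty := by
      rw [← Finset.card_pos, hcard]; omega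
    have h1 := eq_Icc_of_setDef_zero _ hne (hall v)
    rw [hcard] at h1
    have h2 : Finset.Icc ((vSpectrum (tripartiteK1 m n) c v).min' hne)
        ((vSpectrum (tripartiteK1 m n) c v).min' hne + (k - 1)) =
        Finset.Ico ((vSpectrum (tripartiteK1 m n) c v).min' hne)
        ((vSpectrum (tripartiteK1 m n) c v).min' hne + k) := by
      ext x
      rw [Finset.mem_Icc, Finset.mem_Ico]
      omega
    exact ⟨_, h1.trans h2⟩
  obtain ⟨α, hα⟩ := hspecIco va (m + n) deg_va (by omega)
  -- counting per residue
  have cnt_b : ∀ (i : Fin m) (r : ℕ), r < d →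
      cntR d r (vSpectrum (tripartiteK1 m n) c (vb i)) = q' := by
    intro i r hr
    obtain ⟨a, ha⟩ := hspecIco (vb i) (n + 1) (deg_vb i) (by omega)
    rw [ha, cntR_Ico_of_dvd d r a (n + 1) (by omega) hr ⟨q', hq'⟩, hq',
      Nat.mul_div_cancel_left _ (by omega)]
  have cnt_c : ∀ (j : Fin n) (r : ℕ), r < d →
      cntR d r (vSpectrum (tripartiteK1 m n) c (vc j)) = p' := by
    intro j r hr
    obtain ⟨a, ha⟩ := hspecIco (vc j) (m + 1) (deg_vc j) (by omega)
    rw [ha, cntR_Ico_of_dvd d r a (m + 1) (by omega) hr ⟨p', hp'⟩, hp',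
      Nat.mul_div_cancel_left _ (by omega)]
  -- the key identity
  have key : ∀ r, r < d → ∃ t, cntR d r (vSpectrum (tripartiteK1 m n) c va) + 2 * t
      = m * q' + n * p' := by
    intro r hr
    have e_a : cntR d r (vSpectrum (tripartiteK1 m n) c va) =
        (∑ i : Fin m, if c s(va, vb i) % d = r then 1 else 0) +
        (∑ j : Fin n, if c s(va, vc j) % d = r then 1 else 0) := by
      rw [expand_cnt c hp d r va]
      simp only [not_adj_va_va, false_and, if_false, adj_va_vb, adj_va_vc, true_and, zero_add]
    have e_b : ∀ i : Fin m, q' =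
        (if c s(vb i, va) % d = r then 1 else 0) +
        (∑ j : Fin n, if c s(vb i, vc j) % d = r then 1 else 0) := by
      intro i
      rw [← cnt_b i r hr, expand_cnt c hp d r (vb i)]
      simp only [adj_vb_va, true_and, adj_vb_vc, not_adj_vb_vb, false_and, if_false,
        Finset.sum_const_zero, zero_add]
    have e_c : ∀ j : Fin n, p' =
        (if c s(vc j, va) % d = r then 1 else 0) +
        (∑ i : Fin m, if c s(vc j, vb i) % d = r then 1 else 0) := by
      intro j
      rw [← cnt_c j r hr, expand_cnt c hp d r (vc j)]
      simp only [adj_vc_va, true_and, adj_vc_vb, not_adj_vc_vc, false_and, if_false,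
        Finset.sum_const_zero, add_zero, zero_add]
    -- orientation swaps
    have hsw1 : ∀ i : Fin m, (if c s(vb i, va) % d = r then 1 else 0 : ℕ) =
        (if c s(va, vb i) % d = r then 1 else 0) := by
      intro i
      have h : c s(vb i, va) = c s(va, vb i) := congrArg c Sym2.eq_swap
      rw [h]
    have hsw2 : ∀ j : Fin n, (if c s(vc j, va) % d = r then 1 else 0 : ℕ) =
        (if c s(va, vc j) % d = r then 1 else 0) := by
      intro j
      have h : c s(vc j, va) = c s(va, vc j) := congrArg c Sym2.eq_swap
      rw [h]
    have hsw3 : ∀ (j : Fin n) (i : Fin m), (if c s(vc j, vb i) % d = r then 1 else 0 : ℕ) =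
        (if c s(vb i, vc j) % d = r then 1 else 0) := by
      intro j i
      have h : c s(vc j, vb i) = c s(vb i, vc j) := congrArg c Sym2.eq_swap
      rw [h]
    have hSb : m * q' = (∑ i : Fin m, if c s(va, vb i) % d = r then 1 else 0) +
        ∑ i : Fin m, ∑ j : Fin n, (if c s(vb i, vc j) % d = r then 1 else 0) := by
      calc m * q' = ∑ _i : Fin m, q' := by
            rw [Finset.sum_const, Finset.card_univ, Fintype.card_fin, smul_eq_mul]
        _ = ∑ i : Fin m, ((if c s(vb i, va) % d = r then 1 else 0) +
              ∑ j : Fin n, (if c s(vb i, vc j) % d = r then 1 else 0)) :=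
            Finset.sum_congr rfl (fun i _ => e_b i)
        _ = (∑ i : Fin m, if c s(vb i, va) % d = r then 1 else 0) +
              ∑ i : Fin m, ∑ j : Fin n, (if c s(vb i, vc j) % d = r then 1 else 0) :=
            Finset.sum_add_distrib
        _ = (∑ i : Fin m, if c s(va, vb i) % d = r then 1 else 0) +
              ∑ i : Fin m, ∑ j : Fin n, (if c s(vb i, vc j) % d = r then 1 else 0) := by
            rw [Finset.sum_congr rfl (fun i _ => hsw1 i)]
    have hSc : n * p' = (∑ j : Fin n, if c s(va, vc j) % d = r then 1 else 0) +
        ∑ i : Fin m, ∑ j : Fin n, (if c s(vb i, vc j) % d = r then 1 else 0) := by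
      calc n * p' = ∑ _j : Fin n, p' := by
            rw [Finset.sum_const, Finset.card_univ, Fintype.card_fin, smul_eq_mul]
        _ = ∑ j : Fin n, ((if c s(vc j, va) % d = r then 1 else 0) +
              ∑ i : Fin m, (if c s(vc j, vb i) % d = r then 1 else 0)) :=
            Finset.sum_congr rfl (fun j _ => e_c j)
        _ = (∑ j : Fin n, if c s(vc j, va) % d = r then 1 else 0) +
              ∑ j : Fin n, ∑ i : Fin m, (if c s(vc j, vb i) % d = r then 1 else 0) :=
            Finset.sum_add_distrib
        _ = (∑ j : Fin n, if c s(va, vc j) % d = r then 1 else 0) +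
              ∑ j : Fin n, ∑ i : Fin m, (if c s(vb i, vc j) % d = r then 1 else 0) := by
            rw [Finset.sum_congr rfl (fun j _ => hsw2 j),
              Finset.sum_congr rfl (fun j (_ : j ∈ Finset.univ) =>
                Finset.sum_congr rfl (fun i _ => hsw3 j i))]
        _ = (∑ j : Fin n, if c s(va, vc j) % d = r then 1 else 0) +
              ∑ i : Fin m, ∑ j : Fin n, (if c s(vb i, vc j) % d = r then 1 else 0) := by
            rw [Finset.sum_comm]
    exact ⟨∑ i : Fin m, ∑ j : Fin n, (if c s(vb i, vc j) % d = r then 1 else 0), by omega⟩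
  -- counts on va's spectrum are two-valued
  have cnt_a_bounds : ∀ r, r < d → ∃ e ≤ 1,
      cntR d r (vSpectrum (tripartiteK1 m n) c va) = (m + n) / d + e := by
    intro r hr
    rw [hα]
    exact cntR_Ico_bounds d r α (m + n) (by omega) hr
  -- all counts are equal
  have hconst : ∀ r, r < d →
      cntR d r (vSpectrum (tripartiteK1 m n) c va) =
      cntR d 0 (vSpectrum (tripartiteK1 m n) c va) := by
    intro r hr
    obtain ⟨e, he, hce⟩ := cnt_a_bounds r hr
    obtain ⟨e0, he0, hce0⟩ := cnt_a_bounds 0 (by omega)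
    obtain ⟨t, ht⟩ := key r hr
    obtain ⟨t0, ht0⟩ := key 0 (by omega)
    omega
  -- summing over residues
  have hsum : d * cntR d 0 (vSpectrum (tripartiteK1 m n) c va) = m + n := by
    have h1 := sum_cntR d (by omega) (vSpectrum (tripartiteK1 m n) c va)
    have hcard : (vSpectrum (tripartiteK1 m n) c va).card = m + n := by
      rw [spec_card _ _ hp, deg_va]
    rw [hcard] at h1
    rw [← h1]
    rw [Finset.sum_congr rfl (fun r hr => hconst r (Finset.mem_range.mp hr))]
    rw [Finset.sum_const, Finset.card_range, smul_eq_mul]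
  -- endgame
  obtain ⟨t0, ht0⟩ := key 0 (by omega)
  set C := cntR d 0 (vSpectrum (tripartiteK1 m n) c va) with hCdef
  -- d divides 2, hence d = 2
  have hdiv : d * (p' + q') = d * C + 2 := by
    rw [Nat.mul_add]
    omega
  have hd2' : d = 2 := by
    by_contra hne
    have hd3 : 3 ≤ d := by omega
    have h0 : (d * (p' + q')) % d = 0 := Nat.mul_mod_right _ _
    have h2 : (d * C + 2) % d = 2 := by
      rw [Nat.mul_add_mod]
      exact Nat.mod_eq_of_lt (by omega)
    rw [hdiv] at h0
    omega
  -- now m, n are odd; derive the parity contradiction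
  rw [hd2'] at hp' hq' hsum
  have hE : (m + 1) * q' + (n + 1) * p' = 4 * (p' * q') := by
    rw [hp', hq']; ring
  have hE2 : (m + 1) * q' = m * q' + q' := by ring
  have hE3 : (n + 1) * p' = n * p' + p' := by ring
  omega

end LowerBoundMain
theorem stmt_19 (m n : ℕ) (hm : 1 ≤ m) (hn : 1 ≤ n) :
    graphDef (tripartiteK1 m n) = if Nat.gcd (m + 1) (n + 1) = 1 then 0 else 1 := by
  split_ifs with h
  · obtain ⟨c, hc, h0⟩ := exists_colDef_zero hm hn h
    rw [graphDef]
    exact Nat.sInf_eq_zero.mpr (Or.inl ⟨c, hc, h0⟩)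
  · rw [graphDef]
    obtain ⟨c1, hc1, h1⟩ := exists_colDef_one hm hn
    have hne : {d | ∃ c, IsProperEdgeColoring (tripartiteK1 m n) c ∧
        colDef (tripartiteK1 m n) c = d}.Nonempty := ⟨1, c1, hc1, h1⟩
    have hmem := Nat.sInf_mem hne
    obtain ⟨c0, hc0, hcd⟩ := hmem
    have hle : sInf {d | ∃ c, IsProperEdgeColoring (tripartiteK1 m n) c ∧
        colDef (tripartiteK1 m n) c = d} ≤ 1 := Nat.sInf_le ⟨c1, hc1, h1⟩
    have hne0 : sInf {d | ∃ c, IsProperEdgeColoring (tripartiteK1 m n) c ∧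
        colDef (tripartiteK1 m n) c = d} ≠ 0 := by
      intro h0
      rw [h0] at hcd
      exact no_colDef_zero hm hn h c0 hc0 hcd
    omega
end
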